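/- arXiv:1308.4520 — 3 statements merged into one kernel-verified Lean document; each statement's English description precedes it below -/
import Mathlib

section
/- For d ≥ 3 and p = 2d/(d+2), there exists a constant c > 0 (depending only on d) such that for every f in ℓ²(Z^d) with ℓ²-norm 1, the sum over z in Z^d and unit vectors e of |f(z+e) - f(z)|^p is at least c. Equivalently, the infimum χ^d(Z^d) of this sum over all normalized f is strictly positive. -/
open scoped ENNReal
open MeasureTheory Filter

instance chiD_countSF {α : Type*} [MeasurableSpace α] [Countable α] [MeasurableSingletonClass α] :
    SigmaFinite (Measure.count : Measure α) := by
  apply Measure.sigmaFinite_of_countable (S := Set.range (fun z : α => ({z} : Set α)))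
  · exact Set.countable_range _
  · rintro s ⟨z, rfl⟩; simp [Measure.count_singleton]
  · ext x; simp

/-- The lintegral w.r.t. the product of counting measures is a tsum. -/
lemma chiD_lint_pi (d : ℕ) (F : (Fin d → ℤ) → ℝ≥0∞) :
    ∫⁻ z, F z ∂(Measure.pi fun _ : Fin d => (Measure.count : Measure ℤ)) = ∑' z, F z := by
  rw [lintegral_countable']
  congr 1; funext z
  have : ({z} : Set (Fin d → ℤ)) = Set.univ.pi (fun i => {z i}) := by
    ext w; simp [funext_iff]
  rw [this, Measure.pi_pi]
  simp

/-- Telescoping: a nonnegative function on `ℤ` tending to `0` at `+∞` is bounded by the total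
variation of its increments. -/
lemma chiD_telescope (v : ℤ → ℝ) (hv : ∀ t, 0 ≤ v t)
    (hlim : Tendsto v atTop (nhds 0)) (t₀ : ℤ) :
    ENNReal.ofReal (v t₀) ≤ ∑' t : ℤ, ENNReal.ofReal |v (t + 1) - v t| := by
  set S := ∑' t : ℤ, ENNReal.ofReal |v (t + 1) - v t| with hS
  have key : ∀ m : ℤ, t₀ ≤ m → ENNReal.ofReal (v t₀) ≤ ENNReal.ofReal (v m) + S := by
    intro m hm
    have h1 : v t₀ ≤ v m + ∑ t ∈ Finset.Ico t₀ m, |v (t + 1) - v t| := by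
      refine Int.le_induction
        (motive := fun n _ => v t₀ ≤ v n + ∑ t ∈ Finset.Ico t₀ n, |v (t + 1) - v t|) (by simp)
        (fun n hn ih => ?_) m hm
      have hins : Finset.Ico t₀ (n + 1) = insert n (Finset.Ico t₀ n) := by
        ext k; simp only [Finset.mem_Ico, Finset.mem_insert]; omega
      rw [hins, Finset.sum_insert (by simp [Finset.mem_Ico])]
      have h2 : v n ≤ v (n + 1) + |v (n + 1) - v n| := by
        rcases abs_cases (v (n + 1) - v n) with ⟨h, _⟩ | ⟨h, _⟩ <;> linarith
      linarith
    calc ENNReal.ofReal (v t₀)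
        ≤ ENNReal.ofReal (v m + ∑ t ∈ Finset.Ico t₀ m, |v (t + 1) - v t|) :=
          ENNReal.ofReal_le_ofReal h1
      _ ≤ ENNReal.ofReal (v m) + ENNReal.ofReal (∑ t ∈ Finset.Ico t₀ m, |v (t + 1) - v t|) :=
          ENNReal.ofReal_add_le
      _ ≤ ENNReal.ofReal (v m) + S := by
          gcongr
          rw [ENNReal.ofReal_sum_of_nonneg (fun t _ => abs_nonneg _)]
          exact ENNReal.summable.sum_le_tsum _ (fun t _ => zero_le)
  have hten : Tendsto (fun m : ℤ => ENNReal.ofReal (v m) + S) atTop (nhds (0 + S)) := by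
    refine Tendsto.add ?_ tendsto_const_nhds
    have : Tendsto (fun m : ℤ => ENNReal.ofReal (v m)) atTop (nhds (ENNReal.ofReal 0)) :=
      (ENNReal.continuous_ofReal.tendsto 0).comp hlim
    simpa using this
  rw [zero_add] at hten
  exact ge_of_tendsto hten (eventually_atTop.2 ⟨t₀, key⟩)

/-- Mean value estimate: for `1 ≤ s` and `0 ≤ b ≤ a`, `a^s - b^s ≤ s * a^(s-1) * (a - b)`. -/
lemma chiD_rpow_mvt {s a b : ℝ} (hs : 1 ≤ s) (hb : 0 ≤ b) (hba : b ≤ a) :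
    a ^ s - b ^ s ≤ s * a ^ (s - 1) * (a - b) := by
  rcases eq_or_lt_of_le hba with rfl | hlt
  · simp
  have ha : 0 ≤ a := hb.trans hba
  obtain ⟨c, hc, hc'⟩ := exists_hasDerivAt_eq_slope (fun x => x ^ s)
    (fun x => s * x ^ (s - 1)) hlt
    (fun x _ => (Real.hasDerivAt_rpow_const (Or.inr hs)).continuousAt.continuousWithinAt)
    (fun x _ => Real.hasDerivAt_rpow_const (Or.inr hs))
  have hc0 : 0 ≤ c := le_of_lt (lt_of_le_of_lt hb hc.1)
  have hab : a - b ≠ 0 := by linarith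
  rw [eq_div_iff hab] at hc'
  have hmono : c ^ (s - 1) ≤ a ^ (s - 1) :=
    Real.rpow_le_rpow hc0 hc.2.le (by linarith)
  have hs0 : (0:ℝ) ≤ s := by linarith
  rw [← hc']
  exact mul_le_mul_of_nonneg_right (mul_le_mul_of_nonneg_left hmono hs0) (by linarith)

/-- `|a^s - b^s| ≤ s * (a^(s-1) + b^(s-1)) * |a - b|` for nonnegative `a, b` and `s ≥ 1`. -/
lemma chiD_rpow_diff {s a b : ℝ} (hs : 1 ≤ s) (ha : 0 ≤ a) (hb : 0 ≤ b) :
    |a ^ s - b ^ s| ≤ s * (a ^ (s - 1) + b ^ (s - 1)) * |a - b| := by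
  have hs0 : (0:ℝ) < s := by linarith
  rcases le_total b a with h | h
  · have h1 : b ^ s ≤ a ^ s := Real.rpow_le_rpow hb h hs0.le
    have h2 := chiD_rpow_mvt hs hb h
    rw [abs_of_nonneg (by linarith), abs_of_nonneg (by linarith)]
    have hb' : 0 ≤ b ^ (s-1) := Real.rpow_nonneg hb _
    nlinarith [mul_nonneg (mul_nonneg (by linarith : (0:ℝ) ≤ s) hb') (sub_nonneg.2 h)]
  · have h1 : a ^ s ≤ b ^ s := Real.rpow_le_rpow ha h hs0.le
    have h2 := chiD_rpow_mvt hs ha h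
    rw [abs_of_nonpos (by linarith), abs_of_nonpos (by linarith)]
    have ha' : 0 ≤ a ^ (s-1) := Real.rpow_nonneg ha _
    nlinarith [mul_nonneg (mul_nonneg (by linarith : (0:ℝ) ≤ s) ha') (sub_nonneg.2 h)]

set_option maxHeartbeats 1000000 in
/-- For d ≥ 3 and p = 2d/(d+2), the discrete p-energy of any ℓ²-normalized
function on ℤ^d is bounded below by a positive constant depending only on d;
equivalently, χ^d(ℤ^d) > 0. -/
theorem chiD_pos_of_dim_ge_three (d : ℕ) (hd : 3 ≤ d) :
    ∃ c : ℝ, 0 < c ∧ ∀ f : (Fin d → ℤ) → ℝ,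
      Summable (fun z => (f z) ^ 2) → ∑' z : Fin d → ℤ, (f z) ^ 2 = 1 →
      ENNReal.ofReal c ≤ ∑' (z : Fin d → ℤ) (e : Fin d),
        ENNReal.ofReal (|f (z + Pi.single e 1) - f z| ^ (2 * (d : ℝ) / ((d : ℝ) + 2))) := by
  classical
  -- basic real constants
  have hd0 : (0:ℝ) < d := by positivity
  have hd3 : (3:ℝ) ≤ d := by exact_mod_cast hd
  have hdne : (d:ℝ) ≠ 0 := hd0.ne'
  have hdm1 : (0:ℝ) < (d:ℝ) - 1 := by linarith
  have hdm1ne : (d:ℝ) - 1 ≠ 0 := hdm1.ne'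
  have hdm2 : (0:ℝ) < (d:ℝ) - 2 := by linarith
  have hdm2ne : (d:ℝ) - 2 ≠ 0 := hdm2.ne'
  have hdp2 : (0:ℝ) < (d:ℝ) + 2 := by linarith
  have hdp2ne : (d:ℝ) + 2 ≠ 0 := hdp2.ne'
  obtain ⟨s, hs_def⟩ : ∃ s : ℝ, s = 2 * ((d:ℝ) - 1) / d := ⟨_, rfl⟩
  obtain ⟨p, hp_def⟩ : ∃ p : ℝ, p = 2 * (d:ℝ) / ((d:ℝ) + 2) := ⟨_, rfl⟩
  obtain ⟨q, hq_def⟩ : ∃ q : ℝ, q = 2 * (d:ℝ) / ((d:ℝ) - 2) := ⟨_, rfl⟩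
  have hs1 : 1 ≤ s := by rw [hs_def, le_div_iff₀ hd0]; linarith
  have hs0 : (0:ℝ) < s := by linarith
  have hp0 : (0:ℝ) < p := by rw [hp_def]; positivity
  have hq1 : (1:ℝ) < q := by rw [hq_def, lt_div_iff₀ hdm2]; linarith
  have hq0 : (0:ℝ) < q := by linarith
  have hqp : q.HolderConjugate p := by
    rw [Real.holderConjugate_iff]
    constructor
    · exact hq1
    · rw [hq_def, hp_def]
      field_simp
      ring
  -- The constant
  obtain ⟨M, hM_def⟩ : ∃ M : ℝ≥0∞, M = ENNReal.ofReal s ^ q * 2 ^ (q - 1) * (2 * d) := ⟨_, rfl⟩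
  have hM0 : M ≠ 0 := by
    rw [hM_def]
    refine mul_ne_zero (mul_ne_zero ?_ ?_) ?_
    · intro h
      rw [ENNReal.rpow_eq_zero_iff] at h
      rcases h with ⟨h, _⟩ | ⟨h, _⟩
      · rw [ENNReal.ofReal_eq_zero] at h; linarith
      · exact ENNReal.ofReal_ne_top h
    · intro h
      rw [ENNReal.rpow_eq_zero_iff] at h
      rcases h with ⟨h, _⟩ | ⟨h, _⟩
      · simp at h
      · simp at h
    · have hne : (d:ℝ≥0∞) ≠ 0 := by
        simp only [ne_eq, Nat.cast_eq_zero]; omega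
      simp [hne]
  have hMtop : M ≠ ∞ := by
    rw [hM_def]
    refine ENNReal.mul_ne_top (ENNReal.mul_ne_top ?_ ?_) ?_
    · exact ENNReal.rpow_ne_top_of_nonneg hq0.le ENNReal.ofReal_ne_top
    · exact ENNReal.rpow_ne_top_of_nonneg (by linarith) (by simp)
    · exact ENNReal.mul_ne_top (by simp) (by simp)
  obtain ⟨K, hK_def⟩ : ∃ K : ℝ≥0∞, K = M ^ (1 / q) := ⟨_, rfl⟩
  have hK0 : K ≠ 0 := by
    rw [hK_def]
    intro h
    rw [ENNReal.rpow_eq_zero_iff] at h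
    rcases h with ⟨h, _⟩ | ⟨_, h⟩
    · exact hM0 h
    · have : (0:ℝ) < 1 / q := one_div_pos.2 hq0
      linarith
  have hKtop : K ≠ ∞ := by
    rw [hK_def]
    exact ENNReal.rpow_ne_top_of_nonneg (one_div_nonneg.2 hq0.le) hMtop
  obtain ⟨cE, hcE_def⟩ : ∃ cE : ℝ≥0∞, cE = (K⁻¹) ^ p := ⟨_, rfl⟩
  have hKinv0 : K⁻¹ ≠ 0 := by simp [hKtop]
  have hKinvtop : K⁻¹ ≠ ∞ := by simp [hK0]
  have hcE0 : cE ≠ 0 := by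
    rw [hcE_def]
    intro h
    rw [ENNReal.rpow_eq_zero_iff] at h
    rcases h with ⟨h, _⟩ | ⟨h, _⟩
    · exact hKinv0 h
    · exact hKinvtop h
  have hcEtop : cE ≠ ∞ := by
    rw [hcE_def]
    exact ENNReal.rpow_ne_top_of_nonneg hp0.le hKinvtop
  refine ⟨cE.toReal, ENNReal.toReal_pos hcE0 hcEtop, ?_⟩
  intro f hsum hnorm
  obtain ⟨g, hg_def⟩ : ∃ g : (Fin d → ℤ) → ℝ, g = fun z => |f z| := ⟨_, rfl⟩
  have hg0 : ∀ z, 0 ≤ g z := by intro z; simp only [hg_def]; exact abs_nonneg _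
  obtain ⟨u, hu_def⟩ : ∃ u : (Fin d → ℤ) → ℝ, u = fun z => g z ^ s := ⟨_, rfl⟩
  have hu0 : ∀ z, 0 ≤ u z := by
    intro z; simp only [hu_def]; exact Real.rpow_nonneg (hg0 z) _
  obtain ⟨D, hD_def⟩ : ∃ D : (Fin d → ℤ) → ℝ≥0∞,
      D = fun z => ∑ i : Fin d, ENNReal.ofReal |u (z + Pi.single i 1) - u z| := ⟨_, rfl⟩
  -- the update identity
  have hupd : ∀ (z : Fin d → ℤ) (i : Fin d) (t : ℤ),
      Function.update z i t + Pi.single i 1 = Function.update z i (t + 1) := by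
    intro z i t
    funext j
    by_cases h : j = i
    · subst h; simp
    · simp [Function.update_of_ne h, Pi.single_eq_of_ne h]
  -- Step 1: 1-d telescoping bound
  have hline : ∀ (z : Fin d → ℤ) (i : Fin d),
      ENNReal.ofReal (u z) ≤ ∫⁻ t, D (Function.update z i t) ∂Measure.count := by
    intro z i
    have hinj : Function.Injective (fun t : ℤ => Function.update z i t) := by
      intro a b h
      simpa using congrFun h i
    have hsum2 : Summable (fun t : ℤ => f (Function.update z i t) ^ 2) :=
      hsum.comp_injective hinj
    have hlim : Tendsto (fun t : ℤ => u (Function.update z i t)) atTop (nhds 0) := by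
      have h1 : Tendsto (fun t : ℤ => f (Function.update z i t) ^ 2) cofinite (nhds 0) :=
        hsum2.tendsto_cofinite_zero
      have h2 : Tendsto (fun t : ℤ => f (Function.update z i t) ^ 2) atTop (nhds 0) := by
        refine h1.mono_left ?_
        rw [Int.cofinite_eq]
        exact le_sup_right
      have h3 : Tendsto (fun t : ℤ => g (Function.update z i t)) atTop (nhds 0) := by
        have := (Real.continuous_sqrt.tendsto 0).comp h2
        simpa [Real.sqrt_sq_eq_abs, Function.comp_def, hg_def] using this
      have h4 : ContinuousAt (fun x : ℝ => x ^ s) 0 :=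
        Real.continuousAt_rpow_const 0 s (Or.inr hs0.le)
      have h5 := h4.tendsto.comp h3
      simpa [hu_def, Real.zero_rpow hs0.ne', Function.comp_def] using h5
    have htel := chiD_telescope (fun t : ℤ => u (Function.update z i t))
      (fun t => hu0 _) hlim (z i)
    have hzz : Function.update z i (z i) = z := Function.update_eq_self i z
    rw [hzz] at htel
    refine htel.trans ?_
    rw [lintegral_count]
    refine ENNReal.tsum_le_tsum (fun t => ?_)
    simp only [hD_def]
    rw [← hupd]
    exact Finset.single_le_sum (f := fun j => ENNReal.ofReal
        |u (Function.update z i t + Pi.single j 1) - u (Function.update z i t)|)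
        (fun j _ => zero_le) (Finset.mem_univ i)
  -- Step 2: grid-lines bound: 1 ≤ ∑' z, D z
  have hstep2 : (1:ℝ≥0∞) ≤ ∑' z, D z := by
    have e3 : s * ((d:ℝ)/((d:ℝ)-1)) = 2 := by
      rw [hs_def]; field_simp
    have hddm1 : (0:ℝ) ≤ (d:ℝ)/((d:ℝ)-1) := (div_pos hd0 hdm1).le
    have hpt : ∀ z : Fin d → ℤ, ENNReal.ofReal ((f z) ^ 2) ≤
        ∏ i : Fin d, (∫⁻ t, D (Function.update z i t) ∂Measure.count) ^ ((1:ℝ)/((d:ℝ)-1)) := by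
      intro z
      have e1 : (f z) ^ 2 = u z ^ ((d:ℝ)/((d:ℝ)-1)) := by
        simp only [hu_def]
        rw [← Real.rpow_mul (hg0 z), e3]
        rw [show ((2:ℝ)) = ((2:ℕ):ℝ) by norm_num, Real.rpow_natCast]
        simp only [hg_def]
        rw [sq_abs]
      have h1 : ENNReal.ofReal ((f z) ^ 2) = ENNReal.ofReal (u z) ^ ((d:ℝ)/((d:ℝ)-1)) := by
        rw [ENNReal.ofReal_rpow_of_nonneg (hu0 z) hddm1, e1]
      have h2 : ENNReal.ofReal (u z) ^ ((d:ℝ)/((d:ℝ)-1)) =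
          ∏ _i : Fin d, ENNReal.ofReal (u z) ^ ((1:ℝ)/((d:ℝ)-1)) := by
        rw [Finset.prod_const, Finset.card_univ, Fintype.card_fin,
          ← ENNReal.rpow_natCast (ENNReal.ofReal (u z) ^ ((1:ℝ)/((d:ℝ)-1))) d,
          ← ENNReal.rpow_mul]
        congr 1
        field_simp
      rw [h1, h2]
      refine Finset.prod_le_prod' (fun i _ => ?_)
      exact ENNReal.rpow_le_rpow (hline z i) (one_div_nonneg.2 hdm1.le)
    have hconj : Real.HolderConjugate (Fintype.card (Fin d)) ((d:ℝ)/((d:ℝ)-1)) := by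
      rw [Fintype.card_fin, Real.holderConjugate_iff]
      constructor
      · exact_mod_cast by linarith
      · field_simp
        ring
    have hgrid := MeasureTheory.lintegral_prod_lintegral_pow_le
      (fun _ : Fin d => (Measure.count : Measure ℤ)) hconj (measurable_of_countable D)
    rw [Fintype.card_fin] at hgrid
    have hchain : (1:ℝ≥0∞) ≤ (∑' z, D z) ^ ((d:ℝ)/((d:ℝ)-1)) := by
      calc (1:ℝ≥0∞) = ∑' z, ENNReal.ofReal ((f z) ^ 2) := by
            rw [← ENNReal.ofReal_tsum_of_nonneg (fun z => sq_nonneg _) hsum, hnorm,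
              ENNReal.ofReal_one]
        _ ≤ ∑' z, ∏ i : Fin d,
              (∫⁻ t, D (Function.update z i t) ∂Measure.count) ^ ((1:ℝ)/((d:ℝ)-1)) :=
            ENNReal.tsum_le_tsum hpt
        _ = ∫⁻ z, (∏ i : Fin d,
              (∫⁻ t, D (Function.update z i t) ∂Measure.count) ^ ((1:ℝ)/((d:ℝ)-1)))
              ∂(Measure.pi fun _ : Fin d => (Measure.count : Measure ℤ)) :=
            (chiD_lint_pi d _).symm
        _ ≤ (∫⁻ z, D z ∂(Measure.pi fun _ : Fin d => (Measure.count : Measure ℤ)))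
              ^ ((d:ℝ)/((d:ℝ)-1)) := hgrid
        _ = (∑' z, D z) ^ ((d:ℝ)/((d:ℝ)-1)) := by rw [chiD_lint_pi]
    by_contra hcon
    push_neg at hcon
    have : (∑' z, D z) ^ ((d:ℝ)/((d:ℝ)-1)) < 1 :=
      ENNReal.rpow_lt_one hcon (div_pos hd0 hdm1)
    exact absurd hchain (not_le.2 this)
  -- Step 3: pointwise bound and Hölder
  obtain ⟨A, hA_def⟩ : ∃ A : (Fin d → ℤ) × Fin d → ℝ≥0∞, A = fun w =>
    ENNReal.ofReal (s * (g (w.1 + Pi.single w.2 1) ^ (s - 1) + g w.1 ^ (s - 1))) := ⟨_, rfl⟩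
  obtain ⟨B, hB_def⟩ : ∃ B : (Fin d → ℤ) × Fin d → ℝ≥0∞, B = fun w =>
    ENNReal.ofReal |f (w.1 + Pi.single w.2 1) - f w.1| := ⟨_, rfl⟩
  have hAB : ∀ z : Fin d → ℤ, ∀ i : Fin d,
      ENNReal.ofReal |u (z + Pi.single i 1) - u z| ≤ A (z, i) * B (z, i) := by
    intro z i
    have hx0 : 0 ≤ g (z + Pi.single i 1) ^ (s-1) := Real.rpow_nonneg (hg0 _) _
    have hy0 : 0 ≤ g z ^ (s-1) := Real.rpow_nonneg (hg0 _) _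
    have h1 : |u (z + Pi.single i 1) - u z| ≤
        (s * (g (z + Pi.single i 1) ^ (s - 1) + g z ^ (s - 1))) *
          |f (z + Pi.single i 1) - f z| := by
      have hdiff := chiD_rpow_diff hs1 (hg0 (z + Pi.single i 1)) (hg0 z)
      have habs : |g (z + Pi.single i 1) - g z| ≤ |f (z + Pi.single i 1) - f z| := by
        simp only [hg_def]
        exact abs_abs_sub_abs_le_abs_sub _ _
      calc |u (z + Pi.single i 1) - u z|
          ≤ s * (g (z + Pi.single i 1) ^ (s-1) + g z ^ (s-1)) * |g (z + Pi.single i 1) - g z| := by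
            simp only [hu_def]
            exact hdiff
        _ ≤ _ := by
            refine mul_le_mul_of_nonneg_left habs ?_
            exact mul_nonneg hs0.le (add_nonneg hx0 hy0)
    calc ENNReal.ofReal |u (z + Pi.single i 1) - u z|
        ≤ ENNReal.ofReal ((s * (g (z + Pi.single i 1) ^ (s-1) + g z ^ (s-1))) *
            |f (z + Pi.single i 1) - f z|) := ENNReal.ofReal_le_ofReal h1
      _ = A (z, i) * B (z, i) := by
          simp only [hA_def, hB_def]
          exact ENNReal.ofReal_mul (mul_nonneg hs0.le (add_nonneg hx0 hy0))
  have hstep3 : (1:ℝ≥0∞) ≤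
      (∑' w : (Fin d → ℤ) × Fin d, A w ^ q) ^ (1/q) *
        (∑' w : (Fin d → ℤ) × Fin d, B w ^ p) ^ (1/p) := by
    have h1 : (1:ℝ≥0∞) ≤ ∑' w : (Fin d → ℤ) × Fin d, A w * B w := by
      refine hstep2.trans ?_
      rw [ENNReal.tsum_prod']
      refine ENNReal.tsum_le_tsum (fun z => ?_)
      simp only [hD_def]
      rw [← tsum_fintype (L := SummationFilter.unconditional _)]
      exact ENNReal.tsum_le_tsum (fun i => hAB z i)
    have hholder := ENNReal.lintegral_mul_le_Lp_mul_Lq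
      (Measure.count : Measure ((Fin d → ℤ) × Fin d)) hqp
      (measurable_of_countable A).aemeasurable (measurable_of_countable B).aemeasurable
    simp_rw [lintegral_count, Pi.mul_apply] at hholder
    exact h1.trans hholder
  -- Step 4: bound the A-factor
  have hAq : (∑' w : (Fin d → ℤ) × Fin d, A w ^ q) ≤ M := by
    have hpt : ∀ w : (Fin d → ℤ) × Fin d, A w ^ q ≤
        ENNReal.ofReal s ^ q * 2 ^ (q-1) *
          (ENNReal.ofReal ((f (w.1 + Pi.single w.2 1)) ^ 2) +
            ENNReal.ofReal ((f w.1) ^ 2)) := by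
      intro w
      have hx0 : 0 ≤ g (w.1 + Pi.single w.2 1) ^ (s - 1) := Real.rpow_nonneg (hg0 _) _
      have hy0 : 0 ≤ g w.1 ^ (s - 1) := Real.rpow_nonneg (hg0 _) _
      have e2 : A w ^ q = ENNReal.ofReal s ^ q *
          (ENNReal.ofReal (g (w.1 + Pi.single w.2 1) ^ (s - 1)) +
            ENNReal.ofReal (g w.1 ^ (s - 1))) ^ q := by
        simp only [hA_def]
        rw [ENNReal.ofReal_mul hs0.le, ENNReal.ofReal_add hx0 hy0,
          ENNReal.mul_rpow_of_nonneg _ _ hq0.le]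
      have e4 : (s - 1) * q = 2 := by
        rw [hs_def, hq_def]
        field_simp
        ring
      have e5 : ENNReal.ofReal (g (w.1 + Pi.single w.2 1) ^ (s - 1)) ^ q =
          ENNReal.ofReal ((f (w.1 + Pi.single w.2 1)) ^ 2) := by
        rw [ENNReal.ofReal_rpow_of_nonneg hx0 hq0.le, ← Real.rpow_mul (hg0 _), e4]
        congr 1
        rw [show ((2:ℝ)) = ((2:ℕ):ℝ) by norm_num, Real.rpow_natCast]
        simp only [hg_def]
        rw [sq_abs]
      have e6 : ENNReal.ofReal (g w.1 ^ (s - 1)) ^ q = ENNReal.ofReal ((f w.1) ^ 2) := by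
        rw [ENNReal.ofReal_rpow_of_nonneg hy0 hq0.le, ← Real.rpow_mul (hg0 _), e4]
        congr 1
        rw [show ((2:ℝ)) = ((2:ℕ):ℝ) by norm_num, Real.rpow_natCast]
        simp only [hg_def]
        rw [sq_abs]
      calc A w ^ q = ENNReal.ofReal s ^ q *
          (ENNReal.ofReal (g (w.1 + Pi.single w.2 1) ^ (s - 1)) +
            ENNReal.ofReal (g w.1 ^ (s - 1))) ^ q := e2
        _ ≤ ENNReal.ofReal s ^ q *
            (2 ^ (q-1) * (ENNReal.ofReal (g (w.1 + Pi.single w.2 1) ^ (s - 1)) ^ q +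
              ENNReal.ofReal (g w.1 ^ (s - 1)) ^ q)) := by
            gcongr
            exact ENNReal.rpow_add_le_mul_rpow_add_rpow _ _ hq1.le
        _ = ENNReal.ofReal s ^ q * 2 ^ (q-1) *
            (ENNReal.ofReal ((f (w.1 + Pi.single w.2 1)) ^ 2) +
              ENNReal.ofReal ((f w.1) ^ 2)) := by
            rw [e5, e6, mul_assoc]
    have hsum1 : ∑' w : (Fin d → ℤ) × Fin d, ENNReal.ofReal ((f w.1) ^ 2) = d := by
      rw [ENNReal.tsum_prod']
      have hc : ∀ z : Fin d → ℤ, ∑' _i : Fin d, ENNReal.ofReal ((f z) ^ 2) =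
          (d : ℝ≥0∞) * ENNReal.ofReal ((f z) ^ 2) := by
        intro z
        rw [tsum_fintype, Finset.sum_const, Finset.card_univ, Fintype.card_fin, nsmul_eq_mul]
      rw [tsum_congr hc, ENNReal.tsum_mul_left]
      rw [← ENNReal.ofReal_tsum_of_nonneg (fun z => sq_nonneg _) hsum, hnorm]
      simp
    have hsum2 : ∑' w : (Fin d → ℤ) × Fin d,
        ENNReal.ofReal ((f (w.1 + Pi.single w.2 1)) ^ 2) = d := by
      rw [ENNReal.tsum_prod', ENNReal.tsum_comm]
      have hc : ∀ i : Fin d, (∑' z : Fin d → ℤ,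
          ENNReal.ofReal ((f (z + Pi.single i 1)) ^ 2)) = 1 := by
        intro i
        have he := Equiv.tsum_eq (Equiv.addRight (Pi.single i 1 : Fin d → ℤ))
          (fun z => ENNReal.ofReal ((f z) ^ 2))
        simp only [Equiv.coe_addRight] at he
        rw [he, ← ENNReal.ofReal_tsum_of_nonneg (fun z => sq_nonneg _) hsum, hnorm]
        simp
      rw [tsum_congr hc, tsum_fintype]
      simp
    calc (∑' w : (Fin d → ℤ) × Fin d, A w ^ q)
        ≤ ∑' w : (Fin d → ℤ) × Fin d, ENNReal.ofReal s ^ q * 2 ^ (q-1) *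
            (ENNReal.ofReal ((f (w.1 + Pi.single w.2 1)) ^ 2) +
              ENNReal.ofReal ((f w.1) ^ 2)) := ENNReal.tsum_le_tsum hpt
      _ = ENNReal.ofReal s ^ q * 2 ^ (q-1) *
            (∑' w : (Fin d → ℤ) × Fin d,
              (ENNReal.ofReal ((f (w.1 + Pi.single w.2 1)) ^ 2) +
                ENNReal.ofReal ((f w.1) ^ 2))) := ENNReal.tsum_mul_left
      _ = ENNReal.ofReal s ^ q * 2 ^ (q-1) * ((d : ℝ≥0∞) + d) := by
            rw [ENNReal.tsum_add, hsum1, hsum2]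
      _ = M := by rw [hM_def]; ring_nf
  -- Step 5: conclude
  obtain ⟨E, hE_def⟩ : ∃ E : ℝ≥0∞, E = ∑' w : (Fin d → ℤ) × Fin d, B w ^ p := ⟨_, rfl⟩
  have hKE : (1:ℝ≥0∞) ≤ K * E ^ (1/p) := by
    refine hstep3.trans ?_
    rw [hE_def]
    gcongr
    rw [hK_def]
    exact ENNReal.rpow_le_rpow hAq (one_div_nonneg.2 hq0.le)
  have hEc : cE ≤ E := by
    have h1 : K⁻¹ ≤ E ^ (1/p) := by
      calc K⁻¹ = K⁻¹ * 1 := (mul_one _).symm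
        _ ≤ K⁻¹ * (K * E ^ (1/p)) := by gcongr
        _ = (K⁻¹ * K) * E ^ (1/p) := by ring
        _ = E ^ (1/p) := by rw [ENNReal.inv_mul_cancel hK0 hKtop, one_mul]
    calc cE = (K⁻¹) ^ p := hcE_def
      _ ≤ (E ^ (1/p)) ^ p := ENNReal.rpow_le_rpow h1 hp0.le
      _ = E := by
          rw [← ENNReal.rpow_mul, one_div, inv_mul_cancel₀ hp0.ne', ENNReal.rpow_one]
  have hEeq : E = ∑' (z : Fin d → ℤ) (e : Fin d),
      ENNReal.ofReal (|f (z + Pi.single e 1) - f z| ^ p) := by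
    rw [hE_def, ENNReal.tsum_prod']
    congr 1
    funext z
    congr 1
    funext i
    simp only [hB_def]
    rw [ENNReal.ofReal_rpow_of_nonneg (abs_nonneg _) hp0.le]
  refine le_trans (le_of_eq ?_) (hEc.trans (le_of_eq ?_))
  · exact ENNReal.ofReal_toReal hcEtop
  · rw [hEeq, hp_def]
end

section
/- If η > d/2 then χ^d(Q_n) → 0 as n → ∞, where Q_n = [-n,n]^d ∩ Z^d. In particular χ^d(Z^d) = 0 when η > d/2. -/
open scoped ENNReal

/-- The discrete variational constant χ^d(B) for B ⊆ ℤ^d with exponent `p`. -/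
noncomputable def chiD (d : ℕ) (p : ℝ) (B : Set (Fin d → ℤ)) : ℝ≥0∞ :=
  ⨅ g : {g : (Fin d → ℤ) → ℝ // Summable (fun z => (g z) ^ 2) ∧
      (∑' z : Fin d → ℤ, (g z) ^ 2) = 1 ∧ Function.support g ⊆ B},
    ∑' (z : Fin d → ℤ) (e : Fin d), ENNReal.ofReal (|g.1 (z + Pi.single e 1) - g.1 z| ^ p)

open Filter

lemma sum_sq_lower (m : ℕ) : (m:ℝ)^3/3 ≤ ∑ j ∈ Finset.range m, ((j:ℝ)+1)^2 := by
  induction m with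
  | zero => simp
  | succ k ih =>
    rw [Finset.sum_range_succ]
    push_cast
    have hk : (0:ℝ) ≤ (k:ℝ) := Nat.cast_nonneg k
    have key : ((k:ℝ)+1)^3/3 - (k:ℝ)^3/3 ≤ ((k:ℝ)+1)^2 := by nlinarith
    linarith

lemma aux_sum (m : ℕ) : (m:ℝ)^3/3 ≤ ∑ j ∈ Finset.range m, ((m:ℝ) - (j:ℝ))^2 := by
  have hrefl := Finset.sum_range_reflect (fun j => ((m:ℝ) - (j:ℝ))^2) m
  rw [← hrefl]
  have key : ∀ j ∈ Finset.range m, ((m:ℝ) - ((m-1-j : ℕ):ℝ))^2 = ((j:ℝ)+1)^2 := by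
    intro j hj
    rw [Finset.mem_range] at hj
    have h1 : (m - 1 - j : ℕ) = m - (j+1) := by omega
    have h2 : ((m - (j+1) : ℕ):ℝ) = (m:ℝ) - ((j:ℝ)+1) := by
      rw [Nat.cast_sub (by omega)]; push_cast; ring
    rw [h1, h2]; ring
  rw [Finset.sum_congr rfl key]
  exact sum_sq_lower m

lemma chiD_le (d : ℕ) (p : ℝ) (B : Set (Fin d → ℤ)) (g : (Fin d → ℤ) → ℝ)
    (h1 : Summable (fun z => (g z) ^ 2)) (h2 : (∑' z : Fin d → ℤ, (g z) ^ 2) = 1)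
    (h3 : Function.support g ⊆ B) :
    chiD d p B ≤ ∑' (z : Fin d → ℤ) (e : Fin d),
      ENNReal.ofReal (|g (z + Pi.single e 1) - g z| ^ p) := by
  rw [chiD]
  exact iInf_le _ (⟨g, h1, h2, h3⟩ : {g : (Fin d → ℤ) → ℝ // Summable (fun z => (g z) ^ 2) ∧
    (∑' z : Fin d → ℤ, (g z) ^ 2) = 1 ∧ Function.support g ⊆ B})

set_option maxHeartbeats 1000000 in
lemma chiD_key (d n : ℕ) (hd : 1 ≤ d) (p : ℝ) (hp : 0 < p)
    (B : Set (Fin d → ℤ)) (hB : ∀ z : Fin d → ℤ, (∀ i, z i ∈ Set.Icc (-(n:ℤ)) n) → z ∈ B) :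
    chiD d p B ≤ ENNReal.ofReal (((d:ℝ) * 3^d * 3 ^ (p*(d:ℝ)/2)) *
      ((n:ℝ)+1) ^ ((d:ℝ) - p*((d:ℝ)+2)/2)) := by
  have hr0 : (0:ℝ) < (n:ℝ)+1 := by positivity
  set r : ℝ := (n:ℝ)+1 with hrdef
  set N : ℤ := (n:ℤ) with hNdef
  set f : ℤ → ℝ := fun k => max (r - |(k:ℝ)|) 0 with hfdef
  have hf_nonneg : ∀ k, 0 ≤ f k := fun k => le_max_right _ _
  have hf_le : ∀ k, f k ≤ r := by
    intro k
    apply max_le _ hr0.le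
    have := abs_nonneg ((k:ℝ))
    linarith
  have hf_zero : ∀ k : ℤ, k ∉ Finset.Icc (-N) N → f k = 0 := by
    intro k hk
    rw [Finset.mem_Icc, not_and_or, not_le, not_le] at hk
    have habs : r ≤ |(k:ℝ)| := by
      rcases hk with h | h
      · have h' : k ≤ -(N+1) := by omega
        have : (k:ℝ) ≤ -((n:ℝ)+1) := by exact_mod_cast h'
        calc r ≤ -(k:ℝ) := by rw [hrdef]; linarith
          _ ≤ |(k:ℝ)| := neg_le_abs _
      · have h' : N+1 ≤ k := by omega
        have : (n:ℝ)+1 ≤ (k:ℝ) := by exact_mod_cast h'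
        exact le_trans (le_of_eq hrdef) (this.trans (le_abs_self _))
    apply max_eq_right
    linarith
  have hf_step : ∀ k : ℤ, |f (k+1) - f k| ≤ 1 := by
    intro k
    have h1 : |f (k+1) - f k| ≤ |(r - |((k:ℝ)+1)|) - (r - |(k:ℝ)|)| := by
      have := abs_max_sub_max_le_abs (r - |((k:ℝ)+1)|) (r - |(k:ℝ)|) 0
      simpa [hfdef, Int.cast_add, Int.cast_one] using this
    have h2 : |(r - |((k:ℝ)+1)|) - (r - |(k:ℝ)|)| = abs (|(k:ℝ)| - |((k:ℝ)+1)|) := by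
      ring_nf
    have h3 : abs (|(k:ℝ)| - |((k:ℝ)+1)|) ≤ |(k:ℝ) - ((k:ℝ)+1)| := abs_abs_sub_abs_le_abs_sub _ _
    have h4 : |(k:ℝ) - ((k:ℝ)+1)| = 1 := by
      rw [show (k:ℝ) - ((k:ℝ)+1) = -1 by ring, abs_neg, abs_one]
    rw [h2] at h1
    exact h1.trans (le_trans h3 (le_of_eq h4))
  set S : ℝ := ∑ k ∈ Finset.Icc (-N) N, f k ^ 2 with hSdef
  have hS_lb : r^3/3 ≤ S := by
    have h1 : ∑ j ∈ Finset.range (n+1), f (j:ℤ) ^2 ≤ S := by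
      have hmap := Finset.sum_map (Finset.range (n+1))
        ⟨fun j : ℕ => (j:ℤ), fun a b h => by simpa using h⟩ (fun k => f k ^ 2)
      change _ = ∑ x ∈ Finset.range (n+1), f (x:ℤ) ^ 2 at hmap
      rw [hSdef, ← hmap]
      apply Finset.sum_le_sum_of_subset_of_nonneg
      · intro k hk
        simp only [Finset.mem_map, Finset.mem_range, Function.Embedding.coeFn_mk] at hk
        obtain ⟨j, hj, rfl⟩ := hk
        change (j:ℤ) ∈ Finset.Icc (-N) N
        rw [Finset.mem_Icc]; omega
      · intro k _ _; positivity
    have h2 : ∀ j ∈ Finset.range (n+1), f (j:ℤ) ^ 2 = (((n:ℝ)+1) - (j:ℝ))^2 := by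
      intro j hj
      rw [Finset.mem_range] at hj
      have hj' : (j:ℝ) ≤ (n:ℝ) := by exact_mod_cast Nat.lt_succ_iff.mp hj
      have : f (j:ℤ) = r - (j:ℝ) := by
        rw [hfdef]
        simp only [Int.cast_natCast]
        rw [abs_of_nonneg (Nat.cast_nonneg j)]
        apply max_eq_left
        rw [hrdef]; linarith
      rw [this, hrdef]
    rw [Finset.sum_congr rfl h2] at h1
    have h3 := aux_sum (n+1)
    have hcast : ((n+1:ℕ):ℝ) = (n:ℝ)+1 := by push_cast; ring
    rw [hcast] at h3
    have h4 : ∑ j ∈ Finset.range (n+1), (((n:ℝ)+1) - (j:ℝ))^2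
        = ∑ j ∈ Finset.range (n+1), f (j:ℤ)^2 := (Finset.sum_congr rfl h2).symm
    calc r^3/3 = ((n:ℝ)+1)^3/3 := by rw [hrdef]
      _ ≤ ∑ j ∈ Finset.range (n+1), (((n:ℝ)+1) - (j:ℝ))^2 := h3
      _ ≤ S := h1
  have hS_pos : 0 < S := lt_of_lt_of_le (by positivity) hS_lb
  have hsqS_pos : 0 < Real.sqrt S := Real.sqrt_pos.mpr hS_pos
  set f1 : ℤ → ℝ := fun k => f k / Real.sqrt S with hf1def
  have hf1_nonneg : ∀ k, 0 ≤ f1 k := fun k => div_nonneg (hf_nonneg k) hsqS_pos.le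
  have hf1_zero : ∀ k : ℤ, k ∉ Finset.Icc (-N) N → f1 k = 0 := by
    intro k hk; rw [hf1def]; simp [hf_zero k hk]
  have hnorm1 : ∑ k ∈ Finset.Icc (-N) N, f1 k ^2 = 1 := by
    rw [hf1def]
    simp only [div_pow]
    rw [← Finset.sum_div, Real.sq_sqrt hS_pos.le, ← hSdef, div_self hS_pos.ne']
  set g : (Fin d → ℤ) → ℝ := fun z => ∏ i, f1 (z i) with hgdef
  set T0 : Finset (Fin d → ℤ) := Fintype.piFinset (fun _ : Fin d => Finset.Icc (-N) N) with hT0def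
  have hg_zero : ∀ z : Fin d → ℤ, z ∉ T0 → g z = 0 := by
    intro z hz
    rw [hT0def, Fintype.mem_piFinset] at hz
    push_neg at hz
    obtain ⟨i, hi⟩ := hz
    exact Finset.prod_eq_zero (Finset.mem_univ i) (hf1_zero _ hi)
  have hSummable : Summable (fun z => g z ^ 2) :=
    summable_of_ne_finset_zero (s := T0) (fun z hz => by rw [hg_zero z hz]; ring)
  have htsum : ∑' z, g z ^2 = 1 := by
    rw [tsum_eq_sum (s := T0) (fun z hz => by rw [hg_zero z hz]; ring)]
    have : ∀ z ∈ T0, g z ^2 = ∏ i, f1 (z i)^2 := by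
      intro z _; rw [hgdef]; rw [← Finset.prod_pow]
    rw [Finset.sum_congr rfl this, hT0def, ← Finset.prod_univ_sum (fun _ : Fin d => Finset.Icc (-N) N) (fun _ k => f1 k ^2)]
    all_goals simp [hnorm1]
  have hsupp : Function.support g ⊆ B := by
    intro z hz
    apply hB
    intro i
    rw [Set.mem_Icc]
    by_contra hcon
    apply hz
    have : z i ∉ Finset.Icc (-N) N := by rw [Finset.mem_Icc]; tauto
    exact Finset.prod_eq_zero (Finset.mem_univ i) (hf1_zero _ this)
  have hstep : chiD d p B ≤
      ∑' (z : Fin d → ℤ) (e : Fin d), ENNReal.ofReal (|g (z + Pi.single e 1) - g z| ^ p) :=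
    chiD_le d p B g hSummable htsum hsupp
  refine hstep.trans ?_
  clear hstep
  set T1 : Finset (Fin d → ℤ) := Fintype.piFinset (fun _ : Fin d => Finset.Icc (-(N+1)) (N+1))
    with hT1def
  have hcoord : ∀ (z : Fin d → ℤ) (e i : Fin d),
      (z + Pi.single e 1 : Fin d → ℤ) i = z i ∨ (z + Pi.single e 1 : Fin d → ℤ) i = z i + 1 := by
    intro z e i
    by_cases h : i = e
    · right; subst h; simp [Pi.single_eq_same]
    · left; simp [Pi.single_apply, h]
  have hg_zero' : ∀ (z : Fin d → ℤ) (i : Fin d), z i ∉ Finset.Icc (-N) N → g z = 0 :=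
    fun z i hi => Finset.prod_eq_zero (Finset.mem_univ i) (hf1_zero _ hi)
  have hvanE : ∀ z ∉ T1,
      ∑ e : Fin d, ENNReal.ofReal (|g (z + Pi.single e 1) - g z| ^ p) = 0 := by
    intro z hz
    rw [hT1def, Fintype.mem_piFinset] at hz
    push_neg at hz
    obtain ⟨i, hi⟩ := hz
    rw [Finset.mem_Icc, not_and_or, not_le, not_le] at hi
    have hz1 : g z = 0 := hg_zero' z i (by rw [Finset.mem_Icc]; omega)
    apply Finset.sum_eq_zero
    intro e _
    have hz2 : g (z + Pi.single e 1) = 0 := by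
      apply hg_zero' _ i
      rcases hcoord z e i with h | h <;> rw [Finset.mem_Icc, h] <;> omega
    rw [hz1, hz2]
    norm_num [Real.zero_rpow hp.ne']
  have hP : ∀ (z : Fin d → ℤ) (e : Fin d),
      |g (z + Pi.single e 1) - g z| ≤ (r / Real.sqrt S)^(d-1) * (1 / Real.sqrt S) := by
    intro z e
    have hprod_eq : ∀ w : Fin d → ℤ, g w = f1 (w e) * ∏ i ∈ Finset.univ.erase e, f1 (w i) :=
      fun w => (Finset.mul_prod_erase _ _ (Finset.mem_univ e)).symm
    have h1 : g (z + Pi.single e 1) = f1 (z e + 1) * ∏ i ∈ Finset.univ.erase e, f1 (z i) := by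
      rw [hprod_eq]
      congr 1
      · congr 1; simp
      · apply Finset.prod_congr rfl
        intro i hi
        have hne : i ≠ e := Finset.ne_of_mem_erase hi
        congr 1
        simp [Pi.single_apply, hne]
    have h2 : g z = f1 (z e) * ∏ i ∈ Finset.univ.erase e, f1 (z i) := hprod_eq z
    rw [h1, h2, ← sub_mul, abs_mul]
    have hDelta : |f1 (z e + 1) - f1 (z e)| ≤ 1 / Real.sqrt S := by
      rw [hf1def]
      simp only
      rw [div_sub_div_same, abs_div, abs_of_nonneg hsqS_pos.le]
      exact div_le_div_of_nonneg_right (hf_step (z e)) hsqS_pos.le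
    have hPb : |∏ i ∈ Finset.univ.erase e, f1 (z i)| ≤ (r / Real.sqrt S)^(d-1) := by
      rw [Finset.abs_prod]
      calc ∏ i ∈ Finset.univ.erase e, |f1 (z i)|
          ≤ ∏ _i ∈ Finset.univ.erase e, (r / Real.sqrt S) := by
            apply Finset.prod_le_prod (fun i _ => abs_nonneg _)
            intro i _
            rw [abs_of_nonneg (hf1_nonneg _), hf1def]
            exact div_le_div_of_nonneg_right (hf_le _) hsqS_pos.le
        _ = (r / Real.sqrt S)^(d-1) := by
            rw [Finset.prod_const, Finset.card_erase_of_mem (Finset.mem_univ e),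
              Finset.card_univ, Fintype.card_fin]
    calc |f1 (z e + 1) - f1 (z e)| * |∏ i ∈ Finset.univ.erase e, f1 (z i)|
        ≤ (1 / Real.sqrt S) * ((r / Real.sqrt S)^(d-1)) :=
          mul_le_mul hDelta hPb (abs_nonneg _) (by positivity)
      _ = (r / Real.sqrt S)^(d-1) * (1 / Real.sqrt S) := mul_comm _ _
  have hterm_nonneg : ∀ (z : Fin d → ℤ) (e : Fin d),
      (0:ℝ) ≤ |g (z + Pi.single e 1) - g z| ^ p :=
    fun z e => Real.rpow_nonneg (abs_nonneg _) _
  set M : ℝ := ((r / Real.sqrt S)^(d-1) * (1 / Real.sqrt S)) ^ p with hMdef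
  have hM0 : 0 ≤ M := by rw [hMdef]; positivity
  have hM_bound : ∀ (z : Fin d → ℤ) (e : Fin d),
      |g (z + Pi.single e 1) - g z| ^ p ≤ M :=
    fun z e => Real.rpow_le_rpow (abs_nonneg _) (hP z e) hp.le
  simp only [tsum_fintype]
  rw [tsum_eq_sum (s := T1) hvanE]
  have hsum_eq : ∑ z ∈ T1, ∑ e : Fin d, ENNReal.ofReal (|g (z + Pi.single e 1) - g z| ^ p)
      = ENNReal.ofReal (∑ z ∈ T1, ∑ e : Fin d, |g (z + Pi.single e 1) - g z| ^ p) := by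
    rw [ENNReal.ofReal_sum_of_nonneg (fun z _ => Finset.sum_nonneg fun e _ => hterm_nonneg z e)]
    exact Finset.sum_congr rfl fun z _ =>
      (ENNReal.ofReal_sum_of_nonneg fun e _ => hterm_nonneg z e).symm
  rw [hsum_eq]
  apply ENNReal.ofReal_le_ofReal
  -- now a purely real inequality
  have hcard : T1.card = (2*n+3)^d := by
    rw [hT1def, Fintype.card_piFinset]
    have hIcc : (Finset.Icc (-(N+1)) (N+1)).card = 2*n+3 := by
      rw [Int.card_Icc]; omega
    rw [Finset.prod_congr rfl (fun i _ => hIcc), Finset.prod_const, Finset.card_univ,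
      Fintype.card_fin]
  have step1 : ∑ z ∈ T1, ∑ e : Fin d, |g (z + Pi.single e 1) - g z| ^ p
      ≤ (T1.card : ℝ) * ((d:ℝ) * M) := by
    calc ∑ z ∈ T1, ∑ e : Fin d, |g (z + Pi.single e 1) - g z| ^ p
        ≤ ∑ _z ∈ T1, ∑ _e : Fin d, M :=
          Finset.sum_le_sum fun z _ => Finset.sum_le_sum fun e _ => hM_bound z e
      _ = (T1.card : ℝ) * ((d:ℝ) * M) := by
          rw [Finset.sum_const, Finset.sum_const, Finset.card_univ, Fintype.card_fin,
            nsmul_eq_mul, nsmul_eq_mul]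
  refine step1.trans ?_
  -- bound M
  have h3pos : (0:ℝ) < Real.sqrt 3 := by positivity
  have hsq : r ^ ((3:ℝ)/2) / Real.sqrt 3 ≤ Real.sqrt S := by
    have h1 : Real.sqrt (r^3/3) ≤ Real.sqrt S := Real.sqrt_le_sqrt hS_lb
    have h2 : Real.sqrt (r^3/3) = r ^ ((3:ℝ)/2) / Real.sqrt 3 := by
      rw [Real.sqrt_div (by positivity) 3]
      congr 1
      rw [show (r:ℝ)^3 = r ^ ((3:ℝ)) from (Real.rpow_natCast r 3).symm,
        Real.sqrt_eq_rpow, ← Real.rpow_mul hr0.le]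
      norm_num
    rw [← h2]; exact h1
  have hsqq : (0:ℝ) < r ^ ((3:ℝ)/2) / Real.sqrt 3 := by positivity
  have hstepA : 1 / Real.sqrt S ≤ Real.sqrt 3 * r ^ (-(3:ℝ)/2) := by
    have h1 : 1 / Real.sqrt S ≤ 1 / (r ^ ((3:ℝ)/2) / Real.sqrt 3) :=
      one_div_le_one_div_of_le hsqq hsq
    have h2 : 1 / (r ^ ((3:ℝ)/2) / Real.sqrt 3) = Real.sqrt 3 * r ^ (-(3:ℝ)/2) := by
      rw [one_div_div, div_eq_mul_inv, ← Real.rpow_neg hr0.le]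
      norm_num
    rw [← h2]; exact h1
  have hstepB : r / Real.sqrt S ≤ Real.sqrt 3 * r ^ (-(1:ℝ)/2) := by
    have h1 : r / Real.sqrt S ≤ r / (r ^ ((3:ℝ)/2) / Real.sqrt 3) :=
      div_le_div_of_nonneg_left hr0.le hsqq hsq
    have h2 : r / (r ^ ((3:ℝ)/2) / Real.sqrt 3) = Real.sqrt 3 * r ^ (-(1:ℝ)/2) := by
      rw [div_div_eq_mul_div, mul_comm, mul_div_assoc]
      congr 1
      rw [show r / r ^ ((3:ℝ)/2) = r ^ (1:ℝ) / r ^ ((3:ℝ)/2) by rw [Real.rpow_one],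
        ← Real.rpow_sub hr0]
      norm_num
    rw [← h2]; exact h1
  have hd1 : ((d-1 : ℕ):ℝ) = (d:ℝ) - 1 := by
    rw [Nat.cast_sub hd]; norm_num
  have hbase : (r / Real.sqrt S)^(d-1) * (1 / Real.sqrt S)
      ≤ 3 ^ ((d:ℝ)/2) * r ^ (-(((d:ℝ)+2)/2)) := by
    have hA : (r / Real.sqrt S)^(d-1) ≤ (Real.sqrt 3 * r ^ (-(1:ℝ)/2))^(d-1) :=
      pow_le_pow_left₀ (by positivity) hstepB _
    calc (r / Real.sqrt S)^(d-1) * (1 / Real.sqrt S)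
        ≤ (Real.sqrt 3 * r ^ (-(1:ℝ)/2))^(d-1) * (Real.sqrt 3 * r ^ (-(3:ℝ)/2)) :=
          mul_le_mul hA hstepA (by positivity) (by positivity)
      _ = 3 ^ ((d:ℝ)/2) * r ^ (-(((d:ℝ)+2)/2)) := by
          rw [mul_pow, Real.sqrt_eq_rpow,
            ← Real.rpow_natCast ((3:ℝ) ^ ((1:ℝ)/2)) (d-1),
            ← Real.rpow_natCast (r ^ (-(1:ℝ)/2)) (d-1),
            ← Real.rpow_mul (by norm_num : (0:ℝ) ≤ 3),
            ← Real.rpow_mul hr0.le, hd1]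
          rw [show ((3:ℝ) ^ ((1:ℝ)/2*((d:ℝ)-1)) * r ^ (-(1:ℝ)/2*((d:ℝ)-1)))
              * ((3:ℝ) ^ ((1:ℝ)/2) * r ^ (-(3:ℝ)/2))
              = ((3:ℝ) ^ ((1:ℝ)/2*((d:ℝ)-1)) * (3:ℝ) ^ ((1:ℝ)/2))
              * (r ^ (-(1:ℝ)/2*((d:ℝ)-1)) * r ^ (-(3:ℝ)/2)) by ring]
          rw [← Real.rpow_add (by norm_num : (0:ℝ) < 3), ← Real.rpow_add hr0]
          congr 1
          · congr 1; ring
          · congr 1; ring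
  have hM : M ≤ 3 ^ (p*(d:ℝ)/2) * r ^ (-(p*((d:ℝ)+2)/2)) := by
    rw [hMdef]
    calc ((r / Real.sqrt S)^(d-1) * (1 / Real.sqrt S)) ^ p
        ≤ (3 ^ ((d:ℝ)/2) * r ^ (-(((d:ℝ)+2)/2))) ^ p :=
          Real.rpow_le_rpow (by positivity) hbase hp.le
      _ = 3 ^ (p*(d:ℝ)/2) * r ^ (-(p*((d:ℝ)+2)/2)) := by
          rw [Real.mul_rpow (by positivity) (by positivity),
            ← Real.rpow_mul (by norm_num : (0:ℝ) ≤ 3), ← Real.rpow_mul hr0.le]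
          congr 1
          · congr 1; ring
          · congr 1; ring
  have hcard' : (T1.card : ℝ) = (2*(n:ℝ)+3)^d := by
    rw [hcard]; push_cast; ring_nf
  have hfin : (T1.card : ℝ) * ((d:ℝ) * M)
      ≤ ((d:ℝ) * 3^d * 3 ^ (p*(d:ℝ)/2)) * r ^ ((d:ℝ) - p*((d:ℝ)+2)/2) := by
    rw [hcard']
    have hb1 : (2*(n:ℝ)+3)^d ≤ (3*r)^d := by
      have h23 : (0:ℝ) ≤ 2*(n:ℝ)+3 := by positivity
      have h23' : 2*(n:ℝ)+3 ≤ 3*r := by rw [hrdef]; push_cast; linarith [(Nat.cast_nonneg n : (0:ℝ) ≤ (n:ℝ))]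
      exact pow_le_pow_left₀ h23 h23' d
    calc (2*(n:ℝ)+3)^d * ((d:ℝ) * M)
        ≤ (3*r)^d * ((d:ℝ) * (3 ^ (p*(d:ℝ)/2) * r ^ (-(p*((d:ℝ)+2)/2)))) := by
          apply mul_le_mul hb1 _ (by positivity) (by positivity)
          exact mul_le_mul_of_nonneg_left hM (Nat.cast_nonneg d)
      _ = ((d:ℝ) * 3^d * 3 ^ (p*(d:ℝ)/2)) * (r ^ ((d:ℝ)) * r ^ (-(p*((d:ℝ)+2)/2))) := by
          rw [mul_pow, Real.rpow_natCast]
          ring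
      _ = ((d:ℝ) * 3^d * 3 ^ (p*(d:ℝ)/2)) * r ^ ((d:ℝ) - p*((d:ℝ)+2)/2) := by
          rw [← Real.rpow_add hr0,
            show (d:ℝ) + -(p*((d:ℝ)+2)/2) = (d:ℝ) - p*((d:ℝ)+2)/2 by ring]
  exact hfin


/-- If η > d/2 then χ^d(Q_n) → 0 as n → ∞, where Q_n = [-n,n]^d ∩ ℤ^d;
in particular χ^d(ℤ^d) = 0. -/
theorem chiD_tendsto_zero (d : ℕ) (hd : 1 ≤ d) (η : ℝ) (hη : (d : ℝ) / 2 < η) :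
    Filter.Tendsto
      (fun n : ℕ => chiD d (2 * η / (η + 1)) {z | ∀ i, z i ∈ Set.Icc (-(n : ℤ)) n})
      Filter.atTop (nhds 0)
    ∧ chiD d (2 * η / (η + 1)) Set.univ = 0 := by
  have hdpos : (0:ℝ) < (d:ℝ) := by exact_mod_cast Nat.pos_of_ne_zero (by omega)
  have hη0 : 0 < η := lt_trans (by positivity) hη
  set p := 2 * η / (η + 1) with hpdef
  have hη1 : (0:ℝ) < η + 1 := by linarith
  have hp : 0 < p := by rw [hpdef]; positivity
  have hα : (d:ℝ) - p*((d:ℝ)+2)/2 < 0 := by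
    rw [sub_neg, hpdef, div_mul_eq_mul_div, div_div, lt_div_iff₀ (by positivity)]
    nlinarith [hη]
  set K : ℝ := (d:ℝ) * 3^d * 3 ^ (p*(d:ℝ)/2) with hKdef
  set α : ℝ := (d:ℝ) - p*((d:ℝ)+2)/2 with hadef
  have hbnd : Filter.Tendsto (fun n : ℕ => ENNReal.ofReal (K * ((n:ℝ)+1) ^ α))
      Filter.atTop (nhds 0) := by
    have h1 : Filter.Tendsto (fun n:ℕ => ((n:ℝ)+1)) Filter.atTop Filter.atTop :=
      Filter.tendsto_atTop_add_const_right _ 1 tendsto_natCast_atTop_atTop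
    have h2 : Filter.Tendsto (fun x:ℝ => x ^ α) Filter.atTop (nhds 0) := by
      have := tendsto_rpow_neg_atTop (y := -α) (by linarith)
      simpa [neg_neg] using this
    have h3 : Filter.Tendsto (fun n:ℕ => K * ((n:ℝ)+1) ^ α) Filter.atTop (nhds (K * 0)) :=
      (h2.comp h1).const_mul K
    rw [mul_zero] at h3
    have h4 := (ENNReal.continuous_ofReal.tendsto 0).comp h3
    simpa [Function.comp_def] using h4
  have hkey : ∀ n : ℕ, chiD d p {z : Fin d → ℤ | ∀ i, z i ∈ Set.Icc (-(n : ℤ)) n}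
      ≤ ENNReal.ofReal (K * ((n:ℝ)+1) ^ α) :=
    fun n => chiD_key d n hd p hp _ (fun z hz => hz)
  have hkey2 : ∀ n : ℕ, chiD d p Set.univ ≤ ENNReal.ofReal (K * ((n:ℝ)+1) ^ α) :=
    fun n => chiD_key d n hd p hp _ (fun z _ => Set.mem_univ z)
  constructor
  · exact tendsto_of_tendsto_of_tendsto_of_le_of_le tendsto_const_nhds hbnd
      (fun n => zero_le) hkey
  · exact le_antisymm
      (le_of_tendsto_of_tendsto' tendsto_const_nhds hbnd hkey2) zero_le
end

section
/- Assume η ≥ d/2 and let p = 2η/(η+1). Then χ^d(Q_n) converges to χ^d(Z^d) as n → ∞, where Q_n = [-n,n]^d ∩ Z^d. -/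
open scoped ENNReal
open Filter Topology

namespace ChiDAux

variable {d : ℕ}

/-- The box `[-m,m]^d` as a finset. -/
noncomputable def boxF (d : ℕ) (m : ℤ) : Finset (Fin d → ℤ) :=
  Fintype.piFinset fun _ => Finset.Icc (-m) m

lemma mem_boxF {m : ℤ} {z : Fin d → ℤ} : z ∈ boxF d m ↔ ∀ i, |z i| ≤ m := by
  simp [boxF, Fintype.mem_piFinset, abs_le, and_comm]

lemma norm_le_of_mem_boxF {m : ℤ} {z : Fin d → ℤ} (h : z ∈ boxF d m) (hm : 0 ≤ (m : ℝ)) :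
    ‖z‖ ≤ (m : ℝ) := by
  rw [pi_norm_le_iff_of_nonneg hm]
  intro i
  rw [Int.norm_eq_abs]
  exact_mod_cast (mem_boxF.1 h i)

lemma le_norm_of_not_mem_boxF {m : ℤ} {z : Fin d → ℤ} (h : z ∉ boxF d m) :
    (m : ℝ) + 1 ≤ ‖z‖ := by
  rw [mem_boxF] at h
  push_neg at h
  obtain ⟨i, hi⟩ := h
  have h1 : (m : ℝ) + 1 ≤ |(z i : ℝ)| := by
    have : m + 1 ≤ |z i| := hi
    calc (m : ℝ) + 1 = ((m + 1 : ℤ) : ℝ) := by push_cast; ring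
    _ ≤ ((|z i| : ℤ) : ℝ) := by exact_mod_cast this
    _ = |(z i : ℝ)| := by push_cast; ring
  calc (m : ℝ) + 1 ≤ |(z i : ℝ)| := h1
  _ = ‖z i‖ := (Int.norm_eq_abs _).symm
  _ ≤ ‖z‖ := norm_le_pi_norm z i

lemma norm_single_le (e : Fin d) : ‖(Pi.single e 1 : Fin d → ℤ)‖ ≤ 1 := by
  rw [pi_norm_le_iff_of_nonneg zero_le_one]
  intro i
  rw [Int.norm_eq_abs]
  rcases eq_or_ne i e with rfl | hne
  · simp
  · simp [Pi.single_eq_of_ne hne]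

/-- Cutoff function. -/
noncomputable def xi (n : ℕ) (z : Fin d → ℤ) : ℝ := min 1 (max 0 (2 - ‖z‖ / n))

lemma xi_nonneg (n : ℕ) (z : Fin d → ℤ) : 0 ≤ xi n z :=
  le_min zero_le_one (le_max_left _ _)

lemma xi_le_one (n : ℕ) (z : Fin d → ℤ) : xi n z ≤ 1 := min_le_left _ _

lemma xi_eq_one {n : ℕ} (hn : 0 < n) {z : Fin d → ℤ} (h : ‖z‖ ≤ n) : xi n z = 1 := by
  have hn' : (0:ℝ) < n := by exact_mod_cast hn
  have : (1:ℝ) ≤ 2 - ‖z‖ / n := by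
    have : ‖z‖ / n ≤ 1 := by rw [div_le_one hn']; exact h
    linarith
  rw [xi, min_eq_left (this.trans (le_max_right _ _))]

lemma xi_eq_zero {n : ℕ} {z : Fin d → ℤ} (hn : 0 < n) (h : 2 * n ≤ ‖z‖) : xi n z = 0 := by
  have hn' : (0:ℝ) < n := by exact_mod_cast hn
  have h2 : 2 - ‖z‖ / n ≤ 0 := by
    rw [sub_nonpos, le_div_iff₀ hn']
    linarith
  rw [xi, max_eq_left h2]
  simp

lemma xi_lip {n : ℕ} (hn : 0 < n) (x y : Fin d → ℤ) :
    |xi n x - xi n y| ≤ ‖x - y‖ / n := by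
  have hn' : (0:ℝ) < n := by exact_mod_cast hn
  have h1 : |xi n x - xi n y| ≤ |(2 - ‖x‖ / n) - (2 - ‖y‖ / n)| := by
    refine (abs_min_sub_min_le_max 1 (max 0 (2 - ‖x‖ / n)) 1 (max 0 (2 - ‖y‖ / n))).trans ?_
    refine max_le (by simp) ?_
    rw [max_comm 0 (2 - ‖x‖ / n), max_comm 0 (2 - ‖y‖ / n)]
    exact abs_max_sub_max_le_abs _ _ _
  have h2 : |(2 - ‖x‖ / n) - (2 - ‖y‖ / n)| = |‖x‖ - ‖y‖| / n := by
    rw [show (2 - ‖x‖ / n) - (2 - ‖y‖ / n) = (‖y‖ - ‖x‖) / n by ring, abs_div,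
      abs_of_pos hn', abs_sub_comm]
  refine h1.trans (h2.le.trans ?_)
  gcongr
  exact abs_norm_sub_norm_le x y
  

lemma pow_add_le {p : ℝ} (hp : 0 < p) {a b δ : ℝ} (ha : 0 ≤ a) (hb : 0 ≤ b) (hδ : 0 < δ) :
    (a + b) ^ p ≤ ((1 + δ) * a) ^ p + ((1 + δ⁻¹) * b) ^ p := by
  have hδ' : 0 < δ⁻¹ := by positivity
  rcases le_or_gt b (δ * a) with h | h
  · refine le_trans (Real.rpow_le_rpow (by linarith) (by nlinarith) hp.le)
      (le_add_of_nonneg_right (Real.rpow_nonneg (by positivity) _))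
  · have hab : a ≤ δ⁻¹ * b := by
      rw [← inv_mul_cancel_left₀ hδ.ne' a]
      exact mul_le_mul_of_nonneg_left h.le hδ'.le
    refine le_trans (Real.rpow_le_rpow (by linarith) (by nlinarith) hp.le)
      (le_add_of_nonneg_left (Real.rpow_nonneg (by positivity) _))

lemma holder_sum {p : ℝ} (hp : 0 < p) (hp2 : p < 2) (s : Finset (Fin d → ℤ))
    (f : (Fin d → ℤ) → ℝ) :
    ∑ w ∈ s, |f w| ^ p ≤ (∑ w ∈ s, (f w) ^ 2) ^ (p / 2) * (s.card : ℝ) ^ (1 - p / 2) := by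
  rcases s.eq_empty_or_nonempty with rfl | hs
  · simp [Real.zero_rpow (by positivity : p / 2 ≠ 0)]
  set c : ℝ := (s.card : ℝ) with hc
  have hc0 : 0 < c := by
    simp only [hc, Nat.cast_pos, Finset.card_pos]
    exact hs
  have hq : (1:ℝ) ≤ 2 / p := by
    rw [le_div_iff₀ hp]; linarith
  have key := Real.arith_mean_le_rpow_mean s (fun _ => c⁻¹) (fun w => |f w| ^ p)
    (fun i _ => by positivity)
    (by simp [Finset.sum_const, hc]; field_simp)
    (fun i _ => Real.rpow_nonneg (abs_nonneg _) _) hq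
  have hsq : ∀ w, (|f w| ^ p) ^ (2 / p) = (f w) ^ 2 := by
    intro w
    rw [← Real.rpow_mul (abs_nonneg _), mul_div_cancel₀ _ hp.ne',
      show ((2:ℝ) = ((2:ℕ):ℝ)) by norm_num, Real.rpow_natCast, sq_abs]
  simp only [hsq] at key
  have e1 : ∑ i ∈ s, c⁻¹ * |f i| ^ p = c⁻¹ * ∑ w ∈ s, |f w| ^ p := by
    rw [Finset.mul_sum]
  have e2 : ∑ i ∈ s, c⁻¹ * (f i) ^ 2 = c⁻¹ * ∑ w ∈ s, (f w) ^ 2 := by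
    rw [Finset.mul_sum]
  simp only [e1, e2, one_div, (by field_simp : (2 / p)⁻¹ = p / 2)] at key
  have hsum2 : 0 ≤ ∑ w ∈ s, (f w) ^ 2 := Finset.sum_nonneg fun w _ => sq_nonneg _
  rw [Real.mul_rpow (by positivity) hsum2] at key
  have := mul_le_mul_of_nonneg_left key hc0.le
  rw [mul_inv_cancel_left₀ hc0.ne'] at this
  refine this.trans (le_of_eq ?_)
  have hcc : c * c⁻¹ ^ (p / 2) = c ^ (1 - p / 2) := by
    rw [Real.inv_rpow hc0.le, ← Real.rpow_neg hc0.le]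
    calc c * c ^ (-(p / 2)) = c ^ (1:ℝ) * c ^ (-(p / 2)) := by rw [Real.rpow_one]
    _ = c ^ (1 - p / 2) := by rw [← Real.rpow_add hc0]; ring_nf
  rw [← hcc]; ring


lemma energy_cutoff {p : ℝ} (hp : 0 < p) (hp2 : p < 2) (hkey : (d:ℝ) * (2 - p) ≤ 2 * p)
    {g : (Fin d → ℤ) → ℝ} (hsum : Summable fun z => (g z) ^ 2)
    {n : ℕ} (hn : 2 ≤ n) {δ : ℝ} (hδ : 0 < δ) :
    (∑' (z : Fin d → ℤ) (e : Fin d),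
        ENNReal.ofReal (|xi n (z + Pi.single e 1) * g (z + Pi.single e 1) - xi n z * g z| ^ p))
      ≤ ENNReal.ofReal ((1 + δ) ^ p) *
          ∑' (z : Fin d → ℤ) (e : Fin d),
            ENNReal.ofReal (|g (z + Pi.single e 1) - g z| ^ p)
        + ENNReal.ofReal ((1 + δ⁻¹) ^ p) *
            ((d : ℝ≥0∞) * ENNReal.ofReal ((9:ℝ) ^ ((d:ℝ) * (1 - p / 2)) *
              (∑' w : {x : Fin d → ℤ // x ∉ boxF d ((n:ℤ) - 2)}, (g w.1) ^ 2) ^ (p / 2))) := by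
  have hn0 : 0 < n := by omega
  have hn' : (0:ℝ) < n := by exact_mod_cast hn0
  have hn1 : (1:ℝ) ≤ n := by exact_mod_cast hn0
  set S : Finset (Fin d → ℤ) := boxF d (2 * n + 1) \ boxF d ((n:ℤ) - 2) with hS
  set E1 : (Fin d → ℤ) → ℝ := fun w => if w ∈ S then |g w| else 0 with hE1
  have hE1nn : ∀ w, 0 ≤ E1 w := by
    intro w; simp only [hE1]; split <;> [exact abs_nonneg _; exact le_rfl]
  -- pointwise bound
  have hpt : ∀ (z : Fin d → ℤ) (e : Fin d),
      |xi n (z + Pi.single e 1) * g (z + Pi.single e 1) - xi n z * g z| ≤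
        |g (z + Pi.single e 1) - g z| + (n:ℝ)⁻¹ * E1 (z + Pi.single e 1) := by
    intro z e
    set w := z + Pi.single e 1 with hw
    have hws : w - z = Pi.single e 1 := by rw [hw]; abel
    have h1 : |xi n w * g w - xi n z * g z| ≤
        xi n z * |g w - g z| + |g w| * |xi n w - xi n z| := by
      have : xi n w * g w - xi n z * g z
          = xi n z * (g w - g z) + g w * (xi n w - xi n z) := by ring
      rw [this]
      refine (abs_add_le _ _).trans ?_
      rw [abs_mul, abs_mul, abs_of_nonneg (xi_nonneg n z)]
    refine h1.trans (add_le_add ?_ ?_)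
    · exact mul_le_of_le_one_left (abs_nonneg _) (xi_le_one n z)
    · by_cases hwS : w ∈ S
      · have : |xi n w - xi n z| ≤ (n:ℝ)⁻¹ := by
          refine (xi_lip hn0 w z).trans ?_
          rw [hws, div_le_iff₀ hn', inv_mul_cancel₀ hn'.ne']
          exact norm_single_le e
        rw [show E1 w = |g w| from if_pos hwS]
        calc |g w| * |xi n w - xi n z| ≤ |g w| * (n:ℝ)⁻¹ :=
              mul_le_mul_of_nonneg_left this (abs_nonneg _)
        _ = (n:ℝ)⁻¹ * |g w| := by ring
      · have hzero : xi n w - xi n z = 0 := by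
          rcases Finset.mem_sdiff.not.1 hwS |> not_and_or.1 with hbig | hsmall
          · -- w outside the big box : both are 0
            have h2 : ((2 * n + 1 : ℤ) : ℝ) + 1 ≤ ‖w‖ := le_norm_of_not_mem_boxF hbig
            have hzn : 2 * (n:ℝ) ≤ ‖z‖ := by
              have := norm_sub_norm_le w (w - z)
              rw [(by abel : w - (w - z) = z)] at this
              rw [hws] at this
              have h3 := norm_single_le e
              push_cast at h2
              nlinarith [this, h3]
            have hwn : 2 * (n:ℝ) ≤ ‖w‖ := by push_cast at h2; linarith
            rw [xi_eq_zero hn0 hwn, xi_eq_zero hn0 hzn, sub_zero]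
          · rw [not_not] at hsmall
            have h2n : (2:ℝ) ≤ (n:ℝ) := by exact_mod_cast hn
            have h2 : ‖w‖ ≤ (((n:ℤ) - 2 : ℤ) : ℝ) :=
              norm_le_of_mem_boxF hsmall (by push_cast; linarith)
            push_cast at h2
            have hzn : ‖z‖ ≤ (n:ℝ) := by
              have h4 : ‖z‖ ≤ ‖w‖ + ‖w - z‖ := by
                have := norm_sub_le w (w - z)
                rw [(by abel : w - (w - z) = z)] at this
                linarith [this]
              rw [hws] at h4
              have h3 := norm_single_le e
              linarith
            rw [xi_eq_one hn0 (by linarith), xi_eq_one hn0 hzn, sub_self]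
        rw [hzero, abs_zero, mul_zero]
        positivity
  have hpt2 : ∀ (z : Fin d → ℤ) (e : Fin d),
      ENNReal.ofReal (|xi n (z + Pi.single e 1) * g (z + Pi.single e 1) - xi n z * g z| ^ p) ≤
        ENNReal.ofReal ((1 + δ) ^ p) * ENNReal.ofReal (|g (z + Pi.single e 1) - g z| ^ p)
          + ENNReal.ofReal ((1 + δ⁻¹) ^ p) *
              ENNReal.ofReal (((n:ℝ)⁻¹ * E1 (z + Pi.single e 1)) ^ p) := by
    intro z e
    have h1 : |xi n (z + Pi.single e 1) * g (z + Pi.single e 1) - xi n z * g z| ^ p ≤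
        (1 + δ) ^ p * |g (z + Pi.single e 1) - g z| ^ p
          + (1 + δ⁻¹) ^ p * ((n:ℝ)⁻¹ * E1 (z + Pi.single e 1)) ^ p := by
      refine (Real.rpow_le_rpow (abs_nonneg _) (hpt z e) hp.le).trans ?_
      refine (pow_add_le hp (abs_nonneg _)
        (mul_nonneg (by positivity) (hE1nn _)) hδ).trans ?_
      rw [Real.mul_rpow (by linarith) (abs_nonneg _),
        Real.mul_rpow (by positivity) (mul_nonneg (by positivity) (hE1nn _))]
    refine (ENNReal.ofReal_le_ofReal h1).trans ?_
    rw [ENNReal.ofReal_add (by positivity) (by positivity),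
      ENNReal.ofReal_mul (by positivity), ENNReal.ofReal_mul (by positivity)]
  refine le_trans (ENNReal.tsum_le_tsum fun z => ENNReal.tsum_le_tsum fun e => hpt2 z e) ?_
  simp only [ENNReal.tsum_add, ENNReal.tsum_mul_left]
  gcongr
  -- remaining : the error sum is small
  rw [ENNReal.tsum_comm]
  have hz : ∀ e : Fin d,
      (∑' z : Fin d → ℤ, ENNReal.ofReal (((n:ℝ)⁻¹ * E1 (z + Pi.single e 1)) ^ p)) =
        ∑' w : Fin d → ℤ, ENNReal.ofReal (((n:ℝ)⁻¹ * E1 w) ^ p) :=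
    fun e => (Equiv.addRight (Pi.single e 1)).tsum_eq
      (fun w => ENNReal.ofReal (((n:ℝ)⁻¹ * E1 w) ^ p))
  simp only [hz]
  rw [tsum_fintype, Finset.sum_const, Finset.card_univ, Fintype.card_fin, nsmul_eq_mul]
  gcongr
  -- now : ∑' w, ofReal ((n⁻¹ * E1 w)^p) ≤ ofReal (9^(d(1-p/2)) * τ^(p/2))
  have hT : (∑' w : Fin d → ℤ, ENNReal.ofReal (((n:ℝ)⁻¹ * E1 w) ^ p)) =
      ∑ w ∈ S, ENNReal.ofReal (((n:ℝ)⁻¹ * E1 w) ^ p) := by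
    refine tsum_eq_sum fun w hw => ?_
    rw [show E1 w = 0 from if_neg hw, mul_zero, Real.zero_rpow hp.ne', ENNReal.ofReal_zero]
  rw [hT, ← ENNReal.ofReal_sum_of_nonneg (fun w _ => Real.rpow_nonneg
    (mul_nonneg (by positivity) (hE1nn _)) _)]
  refine ENNReal.ofReal_le_ofReal ?_
  -- real arithmetic
  set τ : ℝ := ∑' w : {x : Fin d → ℤ // x ∉ boxF d ((n:ℤ) - 2)}, (g w.1) ^ 2 with hτ
  have hτ0 : 0 ≤ τ := tsum_nonneg fun w => sq_nonneg _
  have hsum1 : ∑ w ∈ S, ((n:ℝ)⁻¹ * E1 w) ^ p = (n:ℝ)⁻¹ ^ p * ∑ w ∈ S, |g w| ^ p := by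
    rw [Finset.mul_sum]
    refine Finset.sum_congr rfl fun w hw => ?_
    rw [show E1 w = |g w| from if_pos hw, Real.mul_rpow (by positivity) (abs_nonneg _)]
  rw [hsum1]
  have hhold := holder_sum hp hp2 S g
  have hT2 : ∑ w ∈ S, (g w) ^ 2 ≤ τ := by
    have heq : ∑ w ∈ S, (g w) ^ 2 =
        ∑ w ∈ S, Set.indicator {x | x ∉ boxF d ((n:ℤ) - 2)} (fun x => (g x) ^ 2) w :=
      Finset.sum_congr rfl fun w hw => by
        rw [Set.indicator_of_mem (show w ∈ {x : Fin d → ℤ | x ∉ boxF d ((n:ℤ) - 2)} from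
          (Finset.mem_sdiff.1 hw).2)]
    have hτeq : τ = ∑' x, Set.indicator {x : Fin d → ℤ | x ∉ boxF d ((n:ℤ) - 2)}
        (fun x => (g x) ^ 2) x :=
      tsum_subtype {x : Fin d → ℤ | x ∉ boxF d ((n:ℤ) - 2)} (fun x => (g x) ^ 2)
    rw [heq, hτeq]
    exact Summable.sum_le_tsum S (fun w _ => Set.indicator_nonneg (fun x _ => sq_nonneg _) _)
      (hsum.indicator _)
  -- cardinality bound
  have hcardN : S.card ≤ (9 * n) ^ d := by
    have h1 : S.card ≤ (boxF d (2 * (n:ℤ) + 1)).card := Finset.card_le_card Finset.sdiff_subset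
    have h2 : (boxF d (2 * (n:ℤ) + 1)).card = (4 * n + 3) ^ d := by
      rw [boxF, Fintype.card_piFinset]
      simp only [Int.card_Icc]
      rw [Finset.prod_const, Finset.card_univ, Fintype.card_fin]
      congr 1
      omega
    rw [h2] at h1
    exact h1.trans (Nat.pow_le_pow_left (by omega) d)
  have hcard : (S.card : ℝ) ^ (1 - p / 2) ≤ ((9:ℝ) * n) ^ ((d:ℝ) * (1 - p / 2)) := by
    have h9 : (0:ℝ) ≤ 9 * n := by positivity
    have h1 : (S.card : ℝ) ≤ ((9:ℝ) * n) ^ (d:ℕ) := by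
      calc (S.card : ℝ) ≤ (((9 * n) ^ d : ℕ) : ℝ) := by exact_mod_cast hcardN
      _ = ((9:ℝ) * n) ^ (d:ℕ) := by push_cast; ring
    calc (S.card : ℝ) ^ (1 - p / 2) ≤ (((9:ℝ) * n) ^ (d:ℕ)) ^ (1 - p / 2) :=
          Real.rpow_le_rpow (Nat.cast_nonneg _) h1 (by linarith)
    _ = ((9:ℝ) * n) ^ ((d:ℝ) * (1 - p / 2)) := by
        rw [← Real.rpow_natCast ((9:ℝ) * n) d, ← Real.rpow_mul h9]
  have hfinal : (n:ℝ)⁻¹ ^ p * ((∑ w ∈ S, (g w) ^ 2) ^ (p / 2) * (S.card : ℝ) ^ (1 - p / 2)) ≤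
      (9:ℝ) ^ ((d:ℝ) * (1 - p / 2)) * τ ^ (p / 2) := by
    have hmono1 : (∑ w ∈ S, (g w) ^ 2) ^ (p / 2) ≤ τ ^ (p / 2) :=
      Real.rpow_le_rpow (Finset.sum_nonneg fun w _ => sq_nonneg _) hT2 (by positivity)
    have hstep : (n:ℝ)⁻¹ ^ p * ((∑ w ∈ S, (g w) ^ 2) ^ (p / 2) * (S.card : ℝ) ^ (1 - p / 2)) ≤
        (n:ℝ)⁻¹ ^ p * (τ ^ (p / 2) * (((9:ℝ)) ^ ((d:ℝ) * (1 - p / 2)) *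
          (n:ℝ) ^ ((d:ℝ) * (1 - p / 2)))) := by
      have h99 : ((9:ℝ) * n) ^ ((d:ℝ) * (1 - p / 2)) =
          (9:ℝ) ^ ((d:ℝ) * (1 - p / 2)) * (n:ℝ) ^ ((d:ℝ) * (1 - p / 2)) :=
        Real.mul_rpow (by norm_num) (by positivity)
      refine mul_le_mul_of_nonneg_left ?_ (by positivity)
      refine mul_le_mul hmono1 (hcard.trans_eq h99) (by positivity) (by positivity)
    refine hstep.trans ?_
    have hnp : (n:ℝ)⁻¹ ^ p * (n:ℝ) ^ ((d:ℝ) * (1 - p / 2)) ≤ 1 := by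
      rw [Real.inv_rpow hn'.le, ← Real.rpow_neg hn'.le, ← Real.rpow_add hn']
      exact Real.rpow_le_one_of_one_le_of_nonpos hn1 (by nlinarith)
    calc (n:ℝ)⁻¹ ^ p * (τ ^ (p / 2) * ((9:ℝ) ^ ((d:ℝ) * (1 - p / 2)) *
            (n:ℝ) ^ ((d:ℝ) * (1 - p / 2))))
        = ((n:ℝ)⁻¹ ^ p * (n:ℝ) ^ ((d:ℝ) * (1 - p / 2))) *
            ((9:ℝ) ^ ((d:ℝ) * (1 - p / 2)) * τ ^ (p / 2)) := by ring
    _ ≤ 1 * ((9:ℝ) ^ ((d:ℝ) * (1 - p / 2)) * τ ^ (p / 2)) :=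
        mul_le_mul_of_nonneg_right hnp (by positivity)
    _ = (9:ℝ) ^ ((d:ℝ) * (1 - p / 2)) * τ ^ (p / 2) := one_mul _
  exact le_trans (mul_le_mul_of_nonneg_left hhold (by positivity)) hfinal

lemma iInf_le_energy {p : ℝ} (hp : 0 < p) (hp2 : p < 2) (hkey : (d:ℝ) * (2 - p) ≤ 2 * p)
    {g : (Fin d → ℤ) → ℝ} (hsum : Summable fun z => (g z) ^ 2)
    (hnorm : (∑' z : Fin d → ℤ, (g z) ^ 2) = 1) :
    (⨅ m : ℕ, chiD d p {z | ∀ i, z i ∈ Set.Icc (-(m : ℤ)) m}) ≤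
      ∑' (z : Fin d → ℤ) (e : Fin d), ENNReal.ofReal (|g (z + Pi.single e 1) - g z| ^ p) := by
  set E := ∑' (z : Fin d → ℤ) (e : Fin d),
    ENNReal.ofReal (|g (z + Pi.single e 1) - g z| ^ p) with hE
  by_cases hEtop : E = ⊤
  · rw [hEtop]; exact le_top
  set I := ⨅ m : ℕ, chiD d p {z | ∀ i, z i ∈ Set.Icc (-(m : ℤ)) m} with hI
  set τ : ℕ → ℝ := fun n => ∑' w : {x : Fin d → ℤ // x ∉ boxF d ((n:ℤ) - 2)}, (g w.1) ^ 2
    with hτdef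
  set N : ℕ → ℝ := fun n => ∑' z, (xi n z * g z) ^ 2 with hNdef
  have hxisq : ∀ (n : ℕ) (z : Fin d → ℤ), (xi n z * g z) ^ 2 ≤ (g z) ^ 2 := by
    intro n z
    have h1 := xi_nonneg n z
    have h2 := xi_le_one n z
    rw [mul_pow]
    have h3 : (xi n z) ^ 2 ≤ 1 := by nlinarith
    calc (xi n z) ^ 2 * (g z) ^ 2 ≤ 1 * (g z) ^ 2 :=
          mul_le_mul_of_nonneg_right h3 (sq_nonneg _)
    _ = (g z) ^ 2 := one_mul _
  have hsumξ : ∀ n, Summable fun z => (xi n z * g z) ^ 2 := fun n =>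
    Summable.of_nonneg_of_le (fun z => sq_nonneg _) (fun z => hxisq n z) hsum
  have hNle : ∀ n, N n ≤ 1 := fun n =>
    hnorm ▸ Summable.tsum_le_tsum (fun z => hxisq n z) (hsumξ n) hsum
  have hNge : ∀ n : ℕ, 0 < n → ∑ z ∈ boxF d (n:ℤ), (g z) ^ 2 ≤ N n := by
    intro n hn0
    have heq : ∀ z ∈ boxF d (n:ℤ), (g z) ^ 2 = (xi n z * g z) ^ 2 := fun z hz => by
      rw [xi_eq_one hn0 (norm_le_of_mem_boxF hz (by positivity)), one_mul]
    rw [Finset.sum_congr rfl heq]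
    exact Summable.sum_le_tsum _ (fun z _ => sq_nonneg _) (hsumξ n)
  have hbox_mem : ∀ (x : Fin d → ℤ) (m : ℤ),
      (∀ i, |x i| ≤ m) → x ∈ boxF d m := fun x m h => mem_boxF.2 h
  have hbox_t0 : Tendsto (fun m : ℕ => boxF d (m:ℤ)) atTop atTop := by
    apply tendsto_atTop_finset_of_monotone
    · intro a b hab z hz
      rw [mem_boxF] at hz ⊢
      exact fun i => (hz i).trans (by exact_mod_cast hab)
    · intro x
      refine ⟨Finset.univ.sup fun i => (x i).natAbs, mem_boxF.2 fun i => ?_⟩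
      have : (x i).natAbs ≤ Finset.univ.sup fun i => (x i).natAbs :=
        Finset.le_sup (f := fun i => (x i).natAbs) (Finset.mem_univ i)
      rw [Int.abs_eq_natAbs]
      omega
  have hbox_t : Tendsto (fun m : ℕ => boxF d ((m:ℤ) - 2)) atTop atTop := by
    apply tendsto_atTop_finset_of_monotone
    · intro a b hab z hz
      rw [mem_boxF] at hz ⊢
      refine fun i => (hz i).trans ?_
      have : (a:ℤ) ≤ b := by exact_mod_cast hab
      omega
    · intro x
      refine ⟨(Finset.univ.sup fun i => (x i).natAbs) + 2, mem_boxF.2 fun i => ?_⟩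
      have : (x i).natAbs ≤ Finset.univ.sup fun i => (x i).natAbs :=
        Finset.le_sup (f := fun i => (x i).natAbs) (Finset.mem_univ i)
      rw [Int.abs_eq_natAbs]
      omega
  have hNlim : Tendsto N atTop (𝓝 1) := by
    have hlow : Tendsto (fun n : ℕ => ∑ z ∈ boxF d (n:ℤ), (g z) ^ 2) atTop (𝓝 1) := by
      have h1 : Tendsto (fun s : Finset (Fin d → ℤ) => ∑ z ∈ s, (g z) ^ 2) atTop (𝓝 1) := by
        have := hsum.hasSum
        rw [hnorm] at this
        exact this
      exact h1.comp hbox_t0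
    refine tendsto_of_tendsto_of_tendsto_of_le_of_le' hlow tendsto_const_nhds ?_ ?_
    · filter_upwards [eventually_ge_atTop 1] with n hn
      exact hNge n hn
    · filter_upwards with n
      exact hNle n
  have hτlim : Tendsto τ atTop (𝓝 0) := by
    have h0 := tendsto_tsum_compl_atTop_zero (f := fun x : Fin d → ℤ => (g x) ^ 2)
    exact h0.comp hbox_t
  suffices H : ∀ δ : ℝ, 0 < δ → I ≤ ENNReal.ofReal ((1 + δ) ^ p) * E by
    have hlim : Tendsto (fun δ : ℝ => ENNReal.ofReal ((1 + δ) ^ p) * E)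
        (nhdsWithin 0 (Set.Ioi 0)) (𝓝 E) := by
      have h1 : Tendsto (fun δ : ℝ => (1:ℝ) + δ) (nhdsWithin 0 (Set.Ioi 0)) (𝓝 1) := by
        have h : Tendsto (fun δ : ℝ => (1:ℝ) + δ) (𝓝 0) (𝓝 1) := by
          simpa [Pi.add_def] using (continuous_const.add continuous_id).tendsto (0:ℝ)
        exact h.mono_left nhdsWithin_le_nhds
      have h2 : Tendsto (fun δ : ℝ => ((1:ℝ) + δ) ^ p) (nhdsWithin 0 (Set.Ioi 0)) (𝓝 1) := by
        have hc : ContinuousAt (fun x : ℝ => x ^ p) 1 :=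
          Real.continuousAt_rpow_const 1 p (Or.inl one_ne_zero)
        have := hc.tendsto.comp h1
        simpa [Real.one_rpow, Function.comp_def] using this
      have h3 : Tendsto (fun δ : ℝ => ENNReal.ofReal ((1 + δ) ^ p))
          (nhdsWithin 0 (Set.Ioi 0)) (𝓝 1) := by
        have := (ENNReal.continuous_ofReal.tendsto 1).comp h2
        simpa [Function.comp_def] using this
      have := ENNReal.Tendsto.mul_const (b := E) h3 (Or.inl (one_ne_zero (α := ℝ≥0∞)))
      simpa [one_mul] using this
    refine ge_of_tendsto hlim ?_
    filter_upwards [self_mem_nhdsWithin] with δ hδ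
    exact H δ hδ
  intro δ hδ
  set A := ENNReal.ofReal ((1 + δ) ^ p) with hA
  set B := ENNReal.ofReal ((1 + δ⁻¹) ^ p) with hB
  set K : ℝ := (9:ℝ) ^ ((d:ℝ) * (1 - p / 2)) with hK
  set R : ℕ → ℝ≥0∞ := fun n =>
    ENNReal.ofReal ((N n ^ (-(1:ℝ)/2)) ^ p) *
      (A * E + B * ((d:ℝ≥0∞) * ENNReal.ofReal (K * τ n ^ (p / 2)))) with hR
  have hev : ∀ᶠ n in atTop, I ≤ R n := by
    have h12 : ∀ᶠ n in atTop, (1:ℝ)/2 < N n := hNlim.eventually (lt_mem_nhds (by norm_num))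
    filter_upwards [h12, eventually_ge_atTop 2] with n hNn hn2
    have hn0 : 0 < n := by omega
    have hN0 : (0:ℝ) < N n := lt_trans (by norm_num) hNn
    set c : ℝ := N n ^ (-(1:ℝ)/2) with hc
    have hc0 : 0 < c := Real.rpow_pos_of_pos hN0 _
    have hcsq : c ^ 2 * N n = 1 := by
      rw [hc, ← Real.rpow_natCast (N n ^ (-(1:ℝ)/2)) 2, ← Real.rpow_mul hN0.le]
      norm_num
      rw [Real.rpow_neg_one]
      exact inv_mul_cancel₀ hN0.ne'
    set gn : (Fin d → ℤ) → ℝ := fun z => c * (xi n z * g z) with hgn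
    have hsumgn : Summable fun z => (gn z) ^ 2 := by
      simpa [hgn, mul_pow] using (hsumξ n).mul_left (c ^ 2)
    have htsumgn : (∑' z, (gn z) ^ 2) = 1 := by
      have h1 : (∑' z, (gn z) ^ 2) = c ^ 2 * ∑' z, (xi n z * g z) ^ 2 := by
        simp only [hgn, mul_pow]
        exact tsum_mul_left
      rw [h1]
      exact hcsq
    have hsupp : Function.support gn ⊆
        {z : Fin d → ℤ | ∀ i, z i ∈ Set.Icc (-((2 * n : ℕ) : ℤ)) ((2 * n : ℕ) : ℤ)} := by
      intro z hz
      have hxi : xi n z ≠ 0 := by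
        intro h
        apply hz
        simp [hgn, h]
      have hnorm2 : ‖z‖ < 2 * (n:ℝ) := by
        by_contra h
        push_neg at h
        exact hxi (xi_eq_zero hn0 h)
      intro i
      have h1 : ‖z i‖ ≤ ‖z‖ := norm_le_pi_norm z i
      rw [Int.norm_eq_abs] at h1
      have h2 : |(z i : ℝ)| ≤ ((2 * n : ℕ) : ℝ) := by
        push_cast
        linarith
      have h3 : |z i| ≤ ((2 * n : ℕ) : ℤ) := by
        rw [← Int.cast_abs] at h2
        exact_mod_cast h2
      simpa [Set.mem_Icc] using abs_le.1 h3
    have step1 : I ≤ chiD d p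
        {z : Fin d → ℤ | ∀ i, z i ∈ Set.Icc (-((2 * n : ℕ) : ℤ)) ((2 * n : ℕ) : ℤ)} :=
      iInf_le _ (2 * n)
    have step2 : chiD d p
        {z : Fin d → ℤ | ∀ i, z i ∈ Set.Icc (-((2 * n : ℕ) : ℤ)) ((2 * n : ℕ) : ℤ)} ≤
        ∑' (z : Fin d → ℤ) (e : Fin d),
          ENNReal.ofReal (|gn (z + Pi.single e 1) - gn z| ^ p) := by
      rw [chiD]
      refine le_trans (iInf_le _ (⟨gn, hsumgn, htsumgn, hsupp⟩ :
        {g0 : (Fin d → ℤ) → ℝ // Summable (fun z => (g0 z) ^ 2) ∧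
          (∑' z : Fin d → ℤ, (g0 z) ^ 2) = 1 ∧ Function.support g0 ⊆
            {z : Fin d → ℤ | ∀ i, z i ∈ Set.Icc (-((2 * n : ℕ) : ℤ)) ((2 * n : ℕ) : ℤ)}})) le_rfl
    have step3 : (∑' (z : Fin d → ℤ) (e : Fin d),
        ENNReal.ofReal (|gn (z + Pi.single e 1) - gn z| ^ p)) =
        ENNReal.ofReal (c ^ p) * ∑' (z : Fin d → ℤ) (e : Fin d),
          ENNReal.ofReal (|xi n (z + Pi.single e 1) * g (z + Pi.single e 1) - xi n z * g z| ^ p) := by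
      rw [← ENNReal.tsum_mul_left]
      congr 1 with z
      rw [← ENNReal.tsum_mul_left]
      congr 1 with e
      rw [← ENNReal.ofReal_mul (Real.rpow_nonneg hc0.le _),
        ← Real.mul_rpow hc0.le (abs_nonneg _)]
      congr 2
      rw [show gn (z + Pi.single e 1) - gn z =
        c * (xi n (z + Pi.single e 1) * g (z + Pi.single e 1) - xi n z * g z) from by
          simp only [hgn]; ring]
      rw [abs_mul, abs_of_pos hc0]
    have step4 := energy_cutoff hp hp2 hkey hsum hn2 hδ
    refine step1.trans (step2.trans ?_)
    rw [step3]
    refine le_trans (mul_le_mul_right step4 _) ?_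
    exact le_of_eq rfl
  have hlim2 : Tendsto R atTop (𝓝 (A * E)) := by
    have hc1 : Tendsto (fun n => ENNReal.ofReal ((N n ^ (-(1:ℝ)/2)) ^ p)) atTop (𝓝 1) := by
      have hc : ContinuousAt (fun x : ℝ => (x ^ (-(1:ℝ)/2)) ^ p) 1 := by
        have h1 : ContinuousAt (fun x : ℝ => x ^ (-(1:ℝ)/2)) 1 :=
          Real.continuousAt_rpow_const 1 _ (Or.inl one_ne_zero)
        exact h1.rpow_const (Or.inl (by rw [Real.one_rpow]; exact one_ne_zero))
      have h2 := hc.tendsto.comp hNlim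
      have h3 := (ENNReal.continuous_ofReal.tendsto _).comp h2
      simpa [Real.one_rpow, Function.comp_def] using h3
    have hτ1 : Tendsto (fun n => ENNReal.ofReal (K * τ n ^ (p / 2))) atTop (𝓝 0) := by
      have hcont : ContinuousAt (fun x : ℝ => K * x ^ (p / 2)) 0 :=
        continuousAt_const.mul (Real.continuousAt_rpow_const 0 _ (Or.inr (by positivity)))
      have h2 := hcont.tendsto.comp hτlim
      have h3 := (ENNReal.continuous_ofReal.tendsto _).comp h2
      simpa [Real.zero_rpow (show p / 2 ≠ 0 by positivity), Function.comp_def] using h3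
    have herr : Tendsto (fun n => A * E + B * ((d:ℝ≥0∞) * ENNReal.ofReal (K * τ n ^ (p / 2))))
        atTop (𝓝 (A * E)) := by
      have h1 : Tendsto (fun n => (d:ℝ≥0∞) * ENNReal.ofReal (K * τ n ^ (p / 2))) atTop (𝓝 0) := by
        have := ENNReal.Tendsto.const_mul (a := (d:ℝ≥0∞)) hτ1 (Or.inr (ENNReal.natCast_ne_top d))
        simpa using this
      have h2 : Tendsto (fun n => B * ((d:ℝ≥0∞) * ENNReal.ofReal (K * τ n ^ (p / 2)))) atTop
          (𝓝 0) := by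
        have := ENNReal.Tendsto.const_mul (a := B) h1 (Or.inr ENNReal.ofReal_ne_top)
        simpa using this
      have := Tendsto.add (tendsto_const_nhds (x := A * E)) h2
      simpa using this
    have := ENNReal.Tendsto.mul hc1 (Or.inl one_ne_zero) herr (Or.inr ENNReal.one_ne_top)
    simpa [one_mul] using this
  exact ge_of_tendsto hlim2 hev

lemma chiD_anti {p : ℝ} {B B' : Set (Fin d → ℤ)} (h : B ⊆ B') :
    chiD d p B' ≤ chiD d p B :=
  le_iInf fun g => iInf_le_of_le ⟨g.1, g.2.1, g.2.2.1, g.2.2.2.trans h⟩ le_rfl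

end ChiDAux

/-- If η ≥ d/2 and p = 2η/(η+1), then χ^d(Q_n) → χ^d(ℤ^d) as n → ∞,
where Q_n = [-n,n]^d ∩ ℤ^d. -/
theorem chiD_boxes_tendsto_chiD_lattice (d : ℕ) (hd : 1 ≤ d) (η : ℝ)
    (hη : (d : ℝ) / 2 ≤ η) :
    Filter.Tendsto
      (fun n : ℕ => chiD d (2 * η / (η + 1)) {z | ∀ i, z i ∈ Set.Icc (-(n : ℤ)) n})
      Filter.atTop (nhds (chiD d (2 * η / (η + 1)) Set.univ)) := by
  set p := 2 * η / (η + 1) with hpdef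
  have hd' : (1:ℝ) ≤ d := by exact_mod_cast hd
  have hη0 : 0 < η := lt_of_lt_of_le (by linarith) hη
  have hη1 : (0:ℝ) < η + 1 := by linarith
  have hp : 0 < p := by rw [hpdef]; positivity
  have hp2 : p < 2 := by rw [hpdef, div_lt_iff₀ hη1]; linarith
  have hkey : (d:ℝ) * (2 - p) ≤ 2 * p := by
    have h1 : (d:ℝ) * (2 - p) = 2 * d / (η + 1) := by rw [hpdef]; field_simp; ring
    have h2 : 2 * p = 4 * η / (η + 1) := by rw [hpdef]; field_simp; ring
    rw [h1, h2, div_le_div_iff₀ hη1 hη1]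
    nlinarith
  have anti : Antitone (fun m : ℕ => chiD d p {z | ∀ i, z i ∈ Set.Icc (-(m:ℤ)) m}) := by
    intro a b hab
    apply ChiDAux.chiD_anti
    intro z hz i
    have h1 := hz i
    simp only [Set.mem_Icc] at h1 ⊢
    omega
  have htend := tendsto_atTop_iInf anti
  have hEq : (⨅ m : ℕ, chiD d p {z | ∀ i, z i ∈ Set.Icc (-(m:ℤ)) m}) = chiD d p Set.univ := by
    refine le_antisymm ?_ (le_iInf fun m => ChiDAux.chiD_anti (Set.subset_univ _))
    exact le_iInf fun g => ChiDAux.iInf_le_energy hp hp2 hkey g.2.1 g.2.2.1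
  rwa [hEq] at htend
end
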